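/- arXiv:1308.4291 — 2 statements merged into one kernel-verified Lean document; each statement's English description precedes it below -/
import Mathlib

section
/- Let a, b, v, u be four points forming a convex quadrilateral (in this cyclic order) in a planar straight-line drawing, with no other vertex of the graph inside the quadrilateral. If the drawing contains the edges (a,v), (v,b), (a,u), (u,b), (u,v) and does not contain edge (a,b), then removing edge (u,v) and adding the straight-line segment between a and b yields a planar straight-line drawing, and the triangle a, b, v contains no vertex of the graph in its interior. -/
/-- A straight-line planar drawing of a graph. -/
def PlanarPos {V : Type*} (G : SimpleGraph V) (pos : V → ℝ × ℝ) : Prop :=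
  Function.Injective pos ∧
    ∀ e₁ ∈ G.edgeSet, ∀ e₂ ∈ G.edgeSet, e₁ ≠ e₂ →
      ∀ a b c d : V, e₁ = s(a, b) → e₂ = s(c, d) →
        segment ℝ (pos a) (pos b) ∩ segment ℝ (pos c) (pos d) ⊆
          pos '' {x | x ∈ e₁ ∧ x ∈ e₂}

open Set


private lemma seg_coords {P Q z : ℝ × ℝ} (h : z ∈ segment ℝ P Q) :
    ∃ t : ℝ, 0 ≤ t ∧ t ≤ 1 ∧ z.1 = (1-t)*P.1 + t*Q.1 ∧ z.2 = (1-t)*P.2 + t*Q.2 := by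
  rw [segment_eq_image] at h
  obtain ⟨t, ht, hz⟩ := h
  exact ⟨t, ht.1, ht.2, by rw [← hz]; simp, by rw [← hz]; simp⟩

private lemma openSeg_coords {P Q z : ℝ × ℝ} (h : z ∈ openSegment ℝ P Q) :
    ∃ t : ℝ, 0 < t ∧ t < 1 ∧ z.1 = (1-t)*P.1 + t*Q.1 ∧ z.2 = (1-t)*P.2 + t*Q.2 := by
  rw [openSegment_eq_image] at h
  obtain ⟨t, ht, hz⟩ := h
  exact ⟨t, ht.1, ht.2, by rw [← hz]; simp, by rw [← hz]; simp⟩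

private lemma seg_mk {P Q z : ℝ × ℝ} {t : ℝ} (h0 : 0 ≤ t) (h1 : t ≤ 1)
    (hz1 : z.1 = (1-t)*P.1 + t*Q.1) (hz2 : z.2 = (1-t)*P.2 + t*Q.2) :
    z ∈ segment ℝ P Q := by
  rw [segment_eq_image]
  exact ⟨t, ⟨h0, h1⟩, by ext <;> simp <;> linarith⟩

private lemma ne_coords {A B : ℝ × ℝ} (hAB : A ≠ B) :
    ¬ (B.1 - A.1 = 0 ∧ B.2 - A.2 = 0) := by
  rintro ⟨h1, h2⟩
  exact hAB (Prod.ext_iff.2 ⟨by linarith, by linarith⟩)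

private lemma sumsq_pos {A B : ℝ × ℝ} (hAB : A ≠ B) :
    0 < (B.1-A.1)*(B.1-A.1) + (B.2-A.2)*(B.2-A.2) := by
  rcases not_and_or.1 (ne_coords hAB) with h' | h' <;>
    nlinarith [mul_self_pos.2 h', mul_self_nonneg (B.1-A.1), mul_self_nonneg (B.2-A.2)]

private lemma line_param {A B P : ℝ × ℝ} (hAB : A ≠ B)
    (h : (B.1-A.1)*(P.2-A.2) - (B.2-A.2)*(P.1-A.1) = 0) :
    ∃ ν : ℝ, P.1 = A.1 + ν*(B.1-A.1) ∧ P.2 = A.2 + ν*(B.2-A.2) := by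
  have hd := sumsq_pos hAB
  refine ⟨((P.1-A.1)*(B.1-A.1) + (P.2-A.2)*(B.2-A.2))/((B.1-A.1)*(B.1-A.1) + (B.2-A.2)*(B.2-A.2)), ?_, ?_⟩
  · rw [div_mul_eq_mul_div, ← sub_eq_iff_eq_add', eq_div_iff hd.ne']
    linear_combination (-(B.2-A.2))*h
  · rw [div_mul_eq_mul_div, ← sub_eq_iff_eq_add', eq_div_iff hd.ne']
    linear_combination (B.1-A.1)*h

private lemma hull4_mk {A V B U q : ℝ × ℝ} {α β γ δ : ℝ}
    (hα : 0 ≤ α) (hβ : 0 ≤ β) (hγ : 0 ≤ γ) (hδ : 0 ≤ δ) (hsum : α+β+γ+δ = 1)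
    (h1 : q.1 = α*A.1+β*V.1+γ*B.1+δ*U.1) (h2 : q.2 = α*A.2+β*V.2+γ*B.2+δ*U.2) :
    q ∈ convexHull ℝ ({A, V, B, U} : Set (ℝ × ℝ)) := by
  have := Finset.centerMass_mem_convexHull (R := ℝ) (E := ℝ × ℝ)
    (Finset.univ : Finset (Fin 4)) (w := ![α, β, γ, δ])
    (by intro i _; fin_cases i <;> simpa)
    (by simp [Fin.sum_univ_four]; linarith)
    (z := ![A, V, B, U]) (s := {A, V, B, U})
    (by intro i _; fin_cases i <;> simp)
  convert this using 1
  rw [Finset.centerMass]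
  simp [Fin.sum_univ_four, hsum]
  ext <;> simp <;> linarith

private lemma hull4_coords {A V B U q : ℝ × ℝ}
    (h : q ∈ convexHull ℝ ({A, V, B, U} : Set (ℝ × ℝ))) :
    ∃ α β γ δ : ℝ, 0 ≤ α ∧ 0 ≤ β ∧ 0 ≤ γ ∧ 0 ≤ δ ∧ α+β+γ+δ = 1 ∧
      q.1 = α*A.1+β*V.1+γ*B.1+δ*U.1 ∧ q.2 = α*A.2+β*V.2+γ*B.2+δ*U.2 := by
  rw [show ({A, V, B, U} : Set (ℝ × ℝ)) = insert A {V, B, U} from rfl,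
    convexHull_insert ⟨V, by simp⟩,
    show ({V, B, U} : Set (ℝ × ℝ)) = insert V {B, U} from rfl,
    convexHull_insert ⟨B, by simp⟩, convexHull_pair] at h
  rw [mem_convexJoin] at h
  obtain ⟨A', hA', x, hx, hqx⟩ := h
  rw [mem_singleton_iff] at hA'
  subst hA'
  rw [mem_convexJoin] at hx
  obtain ⟨V', hV', y, hy, hxy⟩ := hx
  rw [mem_singleton_iff] at hV'
  subst hV'
  obtain ⟨r, hr0, hr1, hq1, hq2⟩ := seg_coords hqx
  obtain ⟨s, hs0, hs1, hx1, hx2⟩ := seg_coords hxy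
  obtain ⟨w, hw0, hw1, hy1, hy2⟩ := seg_coords hy
  refine ⟨1-r, r*(1-s), r*s*(1-w), r*s*w, by linarith, ?_, ?_, ?_, by ring, ?_, ?_⟩
  · exact mul_nonneg hr0 (by linarith)
  · exact mul_nonneg (mul_nonneg hr0 hs0) (by linarith)
  · exact mul_nonneg (mul_nonneg hr0 hs0) hw0
  · rw [hq1, hx1, hy1]; ring
  · rw [hq2, hx2, hy2]; ring

set_option maxHeartbeats 1000000 in
private lemma interior4 {A V B U q : ℝ × ℝ} {α β γ δ : ℝ}
    (hD : (B.1-A.1)*(V.2-A.2) - (B.2-A.2)*(V.1-A.1) ≠ 0)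
    (hα : 0 < α) (hβ : 0 < β) (hγ : 0 < γ) (hδ : 0 < δ) (hsum : α+β+γ+δ = 1)
    (h1 : q.1 = α*A.1+β*V.1+γ*B.1+δ*U.1) (h2 : q.2 = α*A.2+β*V.2+γ*B.2+δ*U.2) :
    q ∈ interior (convexHull ℝ ({A, V, B, U} : Set (ℝ × ℝ))) := by
  obtain ⟨e11, he11⟩ : ∃ r : ℝ, r = V.1 - A.1 := ⟨_, rfl⟩
  obtain ⟨e12, he12⟩ : ∃ r : ℝ, r = V.2 - A.2 := ⟨_, rfl⟩
  obtain ⟨e21, he21⟩ : ∃ r : ℝ, r = B.1 - A.1 := ⟨_, rfl⟩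
  obtain ⟨e22, he22⟩ : ∃ r : ℝ, r = B.2 - A.2 := ⟨_, rfl⟩
  obtain ⟨Dd, hDd⟩ : ∃ r : ℝ, r = e11*e22 - e12*e21 := ⟨_, rfl⟩
  have hDne : Dd ≠ 0 := by
    rw [hDd, he11, he12, he21, he22]; intro hc; apply hD; linarith
  have hDpos : 0 < |Dd| := abs_pos.2 hDne
  obtain ⟨M, hM⟩ : ∃ r : ℝ, r = (|e11|+|e12|+|e21|+|e22|+1)/|Dd| := ⟨_, rfl⟩
  have hMpos : 0 < M := by
    rw [hM]
    apply div_pos _ hDpos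
    have := abs_nonneg e11; have := abs_nonneg e12; have := abs_nonneg e21
    have := abs_nonneg e22; linarith
  obtain ⟨μ, hμ⟩ : ∃ r : ℝ, r = min α (min β γ) := ⟨_, rfl⟩
  have hμpos : 0 < μ := hμ ▸ lt_min hα (lt_min hβ hγ)
  have hμα : μ ≤ α := hμ ▸ min_le_left _ _
  have hμβ' : μ ≤ β := le_trans (hμ ▸ min_le_right _ _) (min_le_left _ _)
  have hμγ : μ ≤ γ := le_trans (hμ ▸ min_le_right _ _) (min_le_right _ _)
  obtain ⟨ε, hε⟩ : ∃ r : ℝ, r = μ/(2*M+2) := ⟨_, rfl⟩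
  have hεpos : 0 < ε := hε ▸ div_pos hμpos (by linarith)
  rw [mem_interior]
  refine ⟨Metric.ball q ε, ?_, Metric.isOpen_ball, Metric.mem_ball_self hεpos⟩
  intro r hr
  obtain ⟨η1, hη1⟩ : ∃ s : ℝ, s = r.1 - q.1 := ⟨_, rfl⟩
  obtain ⟨η2, hη2⟩ : ∃ s : ℝ, s = r.2 - q.2 := ⟨_, rfl⟩
  have hd1 : |η1| ≤ dist r q := by
    have := norm_fst_le (r - q)
    rw [hη1]; simpa [Real.norm_eq_abs, dist_eq_norm] using this
  have hd2 : |η2| ≤ dist r q := by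
    have := norm_snd_le (r - q)
    rw [hη2]; simpa [Real.norm_eq_abs, dist_eq_norm] using this
  have hrq : dist r q < ε := Metric.mem_ball.1 hr
  obtain ⟨x, hx⟩ : ∃ s : ℝ, s = (η1*e22 - η2*e21)/Dd := ⟨_, rfl⟩
  obtain ⟨y, hy⟩ : ∃ s : ℝ, s = (e11*η2 - e12*η1)/Dd := ⟨_, rfl⟩
  have hid1 : η1 = x*e11 + y*e21 := by
    rw [hx, hy]; field_simp
    first
    | linear_combination η1 * hDd
    | linear_combination (-η1) * hDd
  have hid2 : η2 = x*e12 + y*e22 := by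
    rw [hx, hy]; field_simp
    first
    | linear_combination η2 * hDd
    | linear_combination (-η2) * hDd
  have hm : (0:ℝ) ≤ dist r q := dist_nonneg
  have t3 : (0:ℝ) ≤ dist r q * (|e11|+|e12|+1) := mul_nonneg hm (by positivity)
  have t4 : (0:ℝ) ≤ dist r q * (|e21|+|e22|+1) := mul_nonneg hm (by positivity)
  have habs1 : |η1 * e22 - η2 * e21| ≤ (|e11| + |e12| + |e21| + |e22| + 1) * dist r q := by
    have h1 := abs_sub (η1 * e22) (η2 * e21)
    rw [abs_mul, abs_mul] at h1
    have t1 : |η1| * |e22| ≤ dist r q * |e22| :=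
      mul_le_mul_of_nonneg_right hd1 (abs_nonneg _)
    have t2 : |η2| * |e21| ≤ dist r q * |e21| :=
      mul_le_mul_of_nonneg_right hd2 (abs_nonneg _)
    linarith [h1, t1, t2, t3]
  have habs2 : |e11 * η2 - e12 * η1| ≤ (|e11| + |e12| + |e21| + |e22| + 1) * dist r q := by
    have h1 := abs_sub (e11 * η2) (e12 * η1)
    rw [abs_mul, abs_mul] at h1
    have t1 : |e11| * |η2| ≤ |e11| * dist r q :=
      mul_le_mul_of_nonneg_left hd2 (abs_nonneg _)
    have t2 : |e12| * |η1| ≤ |e12| * dist r q :=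
      mul_le_mul_of_nonneg_left hd1 (abs_nonneg _)
    linarith [h1, t1, t2, t4]
  have hxb : |x| ≤ M * dist r q := by
    calc |x| = |η1*e22 - η2*e21| / |Dd| := by rw [hx, abs_div]
    _ ≤ ((|e11| + |e12| + |e21| + |e22| + 1) * dist r q) / |Dd| := by gcongr
    _ = M * dist r q := by rw [hM, div_mul_eq_mul_div]
  have hyb : |y| ≤ M * dist r q := by
    calc |y| = |e11*η2 - e12*η1| / |Dd| := by rw [hy, abs_div]
    _ ≤ ((|e11| + |e12| + |e21| + |e22| + 1) * dist r q) / |Dd| := by gcongr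
    _ = M * dist r q := by rw [hM, div_mul_eq_mul_div]
  have hkey : M * dist r q ≤ μ/2 := by
    have hstep : M * dist r q ≤ M * ε := mul_le_mul_of_nonneg_left hrq.le hMpos.le
    calc M * dist r q ≤ M * ε := hstep
    _ = M * μ / (2*M+2) := by rw [hε]; ring
    _ ≤ μ/2 := by
        rw [div_le_div_iff₀ (by linarith) (by norm_num)]
        nlinarith [hμpos, hMpos]
  have hxabs := abs_le.1 (le_trans hxb hkey)
  have hyabs := abs_le.1 (le_trans hyb hkey)
  apply hull4_mk (α := α - x - y) (β := β + x) (γ := γ + y) (δ := δ)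
  · linarith
  · linarith
  · linarith
  · linarith
  · linarith
  · rw [show r.1 = q.1 + η1 by rw [hη1]; ring, h1, hid1, he11, he21]; ring
  · rw [show r.2 = q.2 + η2 by rw [hη2]; ring, h2, hid2, he12, he22]; ring

private lemma frontier_hit {K : Set (ℝ × ℝ)} (hK : IsClosed K) {X Y : ℝ × ℝ}
    {t₁ : ℝ}
    (hmem : t₁ ∈ {t : ℝ | t ∈ Icc (0:ℝ) 1 ∧ X + t • (Y - X) ∈ K})
    (ht₁ : t₁ = sInf {t : ℝ | t ∈ Icc (0:ℝ) 1 ∧ X + t • (Y - X) ∈ K})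
    (hpos : 0 < t₁) : X + t₁ • (Y - X) ∈ frontier K := by
  set I := {t : ℝ | t ∈ Icc (0:ℝ) 1 ∧ X + t • (Y - X) ∈ K} with hI
  have hbdd : BddBelow I := ⟨0, fun t ht => ht.1.1⟩
  rw [frontier_eq_closure_inter_closure]
  refine ⟨subset_closure hmem.2, ?_⟩
  rw [Metric.mem_closure_iff]
  intro ε hε
  set δ : ℝ := min (t₁/2) (ε/(2*(‖Y - X‖+1))) with hδ
  have hnorm : (0:ℝ) < ‖Y - X‖ + 1 := by positivity
  have hδpos : 0 < δ := lt_min (by linarith) (by positivity)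
  have hδle : δ ≤ t₁/2 := min_le_left _ _
  have hδle2 : δ ≤ ε/(2*(‖Y - X‖+1)) := min_le_right _ _
  refine ⟨X + (t₁ - δ) • (Y - X), ?_, ?_⟩
  · intro hc
    have hIc : t₁ - δ ∉ I := notMem_of_lt_csInf (by rw [← ht₁]; linarith) hbdd
    apply hIc
    exact ⟨⟨by linarith, by linarith [hmem.1.2]⟩, hc⟩
  · rw [dist_eq_norm]
    have : X + t₁ • (Y - X) - (X + (t₁ - δ) • (Y - X)) = δ • (Y - X) := by
      rw [sub_smul]; abel
    rw [this, norm_smul, Real.norm_eq_abs, abs_of_pos hδpos]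
    calc δ * ‖Y - X‖ ≤ (ε/(2*(‖Y - X‖+1))) * ‖Y - X‖ := by
          apply mul_le_mul_of_nonneg_right hδle2 (norm_nonneg _)
    _ < ε := by
          rw [div_mul_eq_mul_div, div_lt_iff₀ (by positivity)]
          nlinarith [norm_nonneg (Y - X), hε]

private lemma support_interior {P : ℝ × ℝ} {s : Set (ℝ × ℝ)} {w : ℝ × ℝ}
    (hw : ¬ (w.1 = 0 ∧ w.2 = 0))
    (hs : ∀ q ∈ s, w.1*q.1 + w.2*q.2 ≤ w.1*P.1 + w.2*P.2) :
    P ∉ interior (convexHull ℝ s) := by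
  intro hP
  have hsub : convexHull ℝ s ⊆ {q : ℝ × ℝ | w.1*q.1 + w.2*q.2 ≤ w.1*P.1 + w.2*P.2} := by
    apply convexHull_min hs
    exact convex_halfSpace_le (𝕜 := ℝ)
      (f := fun q : ℝ × ℝ => w.1*q.1 + w.2*q.2)
      ⟨fun p q => by simp; ring, fun c p => by simp; ring⟩ _
  rw [mem_interior] at hP
  obtain ⟨U, hUsub, hUopen, hPU⟩ := hP
  obtain ⟨ε, hεpos, hball⟩ := Metric.isOpen_iff.1 hUopen P hPU
  have hwsq : 0 < w.1*w.1 + w.2*w.2 := by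
    rcases not_and_or.1 hw with h' | h' <;>
      nlinarith [mul_self_pos.2 h', mul_self_nonneg w.1, mul_self_nonneg w.2]
  set n : ℝ := ‖w‖ + 1 with hn
  have hnpos : (0:ℝ) < n := by positivity
  set z : ℝ × ℝ := P + (ε/(2*n)) • w with hz
  have hzball : z ∈ Metric.ball P ε := by
    rw [Metric.mem_ball, dist_eq_norm, hz]
    have : P + (ε/(2*n)) • w - P = (ε/(2*n)) • w := by abel
    rw [this, norm_smul, Real.norm_eq_abs, abs_of_pos (by positivity)]
    rw [div_mul_eq_mul_div, div_lt_iff₀ (by positivity)]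
    nlinarith [norm_nonneg w, hεpos, hnpos, (by rw [hn]; linarith [norm_nonneg w] : ‖w‖ < n)]
  have hzK := hsub (hUsub (hball hzball))
  rw [mem_setOf_eq] at hzK
  have hz1 : z.1 = P.1 + (ε/(2*n)) * w.1 := by rw [hz]; simp
  have hz2 : z.2 = P.2 + (ε/(2*n)) * w.2 := by rw [hz]; simp
  rw [hz1, hz2] at hzK
  have hq : 0 < (ε/(2*n)) * (w.1*w.1 + w.2*w.2) := by positivity
  nlinarith [hzK, hq]

private lemma decomp {A V B U c p : ℝ × ℝ} {t s α β γ δ : ℝ}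
    (ht0 : 0 < t) (ht1 : t < 1) (hs0 : 0 < s) (hs1 : s < 1)
    (hc1 : c.1 = (1-t)*U.1 + t*V.1) (hc2 : c.2 = (1-t)*U.2 + t*V.2)
    (hc1' : c.1 = (1-s)*A.1 + s*B.1) (hc2' : c.2 = (1-s)*A.2 + s*B.2)
    (hα : 0 ≤ α) (hβ : 0 ≤ β) (hγ : 0 ≤ γ) (hδ : 0 ≤ δ) (hsum : α+β+γ+δ = 1)
    (hp1 : p.1 = α*A.1+β*V.1+γ*B.1+δ*U.1) (hp2 : p.2 = α*A.2+β*V.2+γ*B.2+δ*U.2)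
    (hgV : (B.1-A.1)*(V.2-A.2) - (B.2-A.2)*(V.1-A.1) ≠ 0)
    (hsign : ((B.1-A.1)*(p.2-A.2) - (B.2-A.2)*(p.1-A.1)) *
      ((B.1-A.1)*(V.2-A.2) - (B.2-A.2)*(V.1-A.1)) ≥ 0) :
    ∃ α' β' γ' : ℝ, 0 ≤ α' ∧ 0 ≤ β' ∧ 0 ≤ γ' ∧ α'+β'+γ' = 1 ∧
      p.1 = α'*A.1+β'*V.1+γ'*B.1 ∧ p.2 = α'*A.2+β'*V.2+γ'*B.2 := by
  obtain ⟨gV, hgVd⟩ : ∃ r : ℝ, r = (B.1-A.1)*(V.2-A.2) - (B.2-A.2)*(V.1-A.1) := ⟨_, rfl⟩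
  obtain ⟨gU, hgUd⟩ : ∃ r : ℝ, r = (B.1-A.1)*(U.2-A.2) - (B.2-A.2)*(U.1-A.1) := ⟨_, rfl⟩
  obtain ⟨gp, hgpd⟩ : ∃ r : ℝ, r = (B.1-A.1)*(p.2-A.2) - (B.2-A.2)*(p.1-A.1) := ⟨_, rfl⟩
  have ht1' : (0:ℝ) < 1 - t := by linarith
  -- relation: (1-t)*gU + t*gV = 0  (since c is on line AB)
  have hrel : (1-t)*gU + t*gV = 0 := by
    rw [hgUd, hgVd]
    have e1 : (1-t)*U.1 + t*V.1 = (1-s)*A.1 + s*B.1 := by rw [← hc1, hc1']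
    have e2 : (1-t)*U.2 + t*V.2 = (1-s)*A.2 + s*B.2 := by rw [← hc2, hc2']
    linear_combination (B.1-A.1) * e2 - (B.2-A.2) * e1
  -- g p = β gV + δ gU
  have hgp : gp = β*gV + δ*gU := by
    rw [hgpd, hgVd, hgUd]
    first
    | linear_combination (B.1-A.1) * hp2 - (B.2-A.2) * hp1 +
        ((B.1-A.1)*A.2 - (B.2-A.2)*A.1) * hsum
    | linear_combination (B.1-A.1) * hp2 - (B.2-A.2) * hp1 -
        ((B.1-A.1)*A.2 - (B.2-A.2)*A.1) * hsum
  refine ⟨α + δ*(1-s)/(1-t), β - δ*t/(1-t), γ + δ*s/(1-t), ?_, ?_, ?_, ?_, ?_, ?_⟩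
  · have : 0 ≤ δ*(1-s)/(1-t) := div_nonneg (mul_nonneg hδ (by linarith)) (by linarith)
    linarith
  · -- β' ≥ 0 from sign condition
    have hβ' : gp = (β - δ*t/(1-t)) * gV := by
      field_simp
      linear_combination (1-t) * hgp + δ * hrel
    have hgV' : gV ≠ 0 := by rw [hgVd]; exact hgV
    have hsign' : gp * gV ≥ 0 := by rw [hgpd, hgVd]; exact hsign
    rw [hβ'] at hsign'
    nlinarith [mul_self_pos.2 hgV', hsign']
  · have : 0 ≤ δ*s/(1-t) := div_nonneg (mul_nonneg hδ hs0.le) (by linarith)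
    linarith
  · field_simp
    linear_combination (1-t) * hsum
  · have e1 : (1-t)*U.1 = (1-s)*A.1 + s*B.1 - t*V.1 := by
      rw [← hc1']; rw [hc1]; ring
    field_simp
    linear_combination (1-t) * hp1 + δ * e1
  · have e2 : (1-t)*U.2 = (1-s)*A.2 + s*B.2 - t*V.2 := by
      rw [← hc2']; rw [hc2]; ring
    field_simp
    linear_combination (1-t) * hp2 + δ * e2

set_option maxHeartbeats 2000000 in
private lemma frontier_sub_sides {A V B U c : ℝ × ℝ} {t s : ℝ}
    (ht0 : 0 < t) (ht1 : t < 1) (hs0 : 0 < s) (hs1 : s < 1)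
    (hc1 : c.1 = (1-t)*U.1 + t*V.1) (hc2 : c.2 = (1-t)*U.2 + t*V.2)
    (hc1' : c.1 = (1-s)*A.1 + s*B.1) (hc2' : c.2 = (1-s)*A.2 + s*B.2)
    (hgV : (B.1-A.1)*(V.2-A.2) - (B.2-A.2)*(V.1-A.1) ≠ 0) :
    frontier (convexHull ℝ ({A, V, B, U} : Set (ℝ × ℝ))) ⊆
      segment ℝ A V ∪ segment ℝ V B ∪ segment ℝ B U ∪ segment ℝ U A := by
  have ht1' : (0:ℝ) < 1 - t := by linarith
  have hE1 : (1-t)*U.1 + t*V.1 = (1-s)*A.1 + s*B.1 := by rw [← hc1, ← hc1']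
  have hE2 : (1-t)*U.2 + t*V.2 = (1-s)*A.2 + s*B.2 := by rw [← hc2, ← hc2']
  obtain ⟨gV, hgVd⟩ : ∃ r : ℝ, r = (B.1-A.1)*(V.2-A.2) - (B.2-A.2)*(V.1-A.1) := ⟨_, rfl⟩
  obtain ⟨gU, hgUd⟩ : ∃ r : ℝ, r = (B.1-A.1)*(U.2-A.2) - (B.2-A.2)*(U.1-A.1) := ⟨_, rfl⟩
  have hgV' : gV ≠ 0 := by rw [hgVd]; exact hgV
  have hrel : (1-t)*gU + t*gV = 0 := by
    rw [hgUd, hgVd]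
    linear_combination (B.1-A.1) * hE2 - (B.2-A.2) * hE1
  have hgU' : gU ≠ 0 := by
    intro hc0
    rw [hc0, mul_zero, zero_add] at hrel
    rcases mul_eq_zero.1 hrel with h | h
    · linarith
    · exact hgV' h
  have hgU : (B.1-A.1)*(U.2-A.2) - (B.2-A.2)*(U.1-A.1) ≠ 0 := by rw [← hgUd]; exact hgU'
  intro p hp
  have hfin : Set.Finite ({A, V, B, U} : Set (ℝ × ℝ)) := Set.toFinite _
  have hclosed : IsClosed (convexHull ℝ ({A, V, B, U} : Set (ℝ × ℝ))) :=
    (hfin.isCompact_convexHull ℝ).isClosed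
  have hpQ : p ∈ convexHull ℝ ({A, V, B, U} : Set (ℝ × ℝ)) := by
    have h' := frontier_subset_closure (s := convexHull ℝ ({A, V, B, U} : Set (ℝ × ℝ))) hp
    rwa [hclosed.closure_eq] at h'
  have hpnotint : p ∉ interior (convexHull ℝ ({A, V, B, U} : Set (ℝ × ℝ))) := by
    rw [frontier] at hp
    exact hp.2
  by_contra hnot
  simp only [mem_union, not_or] at hnot
  obtain ⟨⟨⟨hnAV, hnVB⟩, hnBU⟩, hnUA⟩ := hnot
  obtain ⟨α, β, γ, δ, hα, hβ, hγ, hδ, hsum, hp1, hp2⟩ := hull4_coords hpQ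
  obtain ⟨gp, hgpd⟩ : ∃ r : ℝ, r = (B.1-A.1)*(p.2-A.2) - (B.2-A.2)*(p.1-A.1) := ⟨_, rfl⟩
  rcases le_or_gt 0 (gp * gV) with hsgn | hsgn
  · -- p on the V side of AB
    obtain ⟨α', β', γ', h1, h2, h3, h4, h5, h6⟩ :=
      decomp ht0 ht1 hs0 hs1 hc1 hc2 hc1' hc2' hα hβ hγ hδ hsum hp1 hp2 hgV
        (by rw [← hgpd, ← hgVd]; exact hsgn)
    have hα' : 0 < α' := by
      rcases eq_or_lt_of_le h1 with h0 | h0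
      · exfalso; apply hnVB
        apply seg_mk (t := γ') h3 (by linarith)
        · linear_combination h5 + V.1*h4 + (V.1-A.1)*h0
        · linear_combination h6 + V.2*h4 + (V.2-A.2)*h0
      · exact h0
    have hγ' : 0 < γ' := by
      rcases eq_or_lt_of_le h3 with h0 | h0
      · exfalso; apply hnAV
        apply seg_mk (t := β') h2 (by linarith)
        · linear_combination h5 + A.1*h4 - (B.1-A.1)*h0
        · linear_combination h6 + A.2*h4 - (B.2-A.2)*h0
      · exact h0
    obtain ⟨lam, hlam⟩ : ∃ r : ℝ, r = min α' γ' := ⟨_, rfl⟩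
    have hlam0 : 0 < lam := hlam ▸ lt_min hα' hγ'
    have hlamα : lam ≤ α' := hlam ▸ min_le_left _ _
    have hlamγ : lam ≤ γ' := hlam ▸ min_le_right _ _
    apply hpnotint
    apply interior4 (α := α' - lam*(1-s)) (β := β' + lam*t) (γ := γ' - lam*s)
      (δ := lam*(1-t)) hgV
    · have := mul_pos hlam0 hs0; linarith
    · have := mul_pos hlam0 ht0; linarith
    · have := mul_pos hlam0 (show (0:ℝ) < 1-s by linarith); linarith
    · exact mul_pos hlam0 (by linarith)
    · ring_nf; linarith [h4]
    · linear_combination h5 - lam * hE1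
    · linear_combination h6 - lam * hE2
  · -- p on the U side of AB
    have hsgnU : 0 ≤ gp * gU := by
      have h' : (1-t)*(gU*gp) + t*(gV*gp) = 0 := by linear_combination gp * hrel
      nlinarith [h', hsgn, ht0, ht1']
    have hc1u : c.1 = (1-(1-t))*V.1 + (1-t)*U.1 := by rw [hc1]; ring
    have hc2u : c.2 = (1-(1-t))*V.2 + (1-t)*U.2 := by rw [hc2]; ring
    obtain ⟨α', β', γ', h1, h2, h3, h4, h5, h6⟩ :=
      decomp (t := 1-t) (by linarith) (by linarith) hs0 hs1 hc1u hc2u hc1' hc2'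
        hα hδ hγ hβ (by linarith) (by rw [hp1]; ring) (by rw [hp2]; ring) hgU
        (by rw [← hgpd, ← hgUd]; exact hsgnU)
    have hα' : 0 < α' := by
      rcases eq_or_lt_of_le h1 with h0 | h0
      · exfalso; apply hnBU
        rw [segment_symm]
        apply seg_mk (t := γ') h3 (by linarith)
        · linear_combination h5 + U.1*h4 + (U.1-A.1)*h0
        · linear_combination h6 + U.2*h4 + (U.2-A.2)*h0
      · exact h0
    have hγ' : 0 < γ' := by
      rcases eq_or_lt_of_le h3 with h0 | h0
      · exfalso; apply hnUA
        rw [segment_symm]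
        apply seg_mk (t := β') h2 (by linarith)
        · linear_combination h5 + A.1*h4 - (B.1-A.1)*h0
        · linear_combination h6 + A.2*h4 - (B.2-A.2)*h0
      · exact h0
    obtain ⟨lam, hlam⟩ : ∃ r : ℝ, r = min α' γ' := ⟨_, rfl⟩
    have hlam0 : 0 < lam := hlam ▸ lt_min hα' hγ'
    have hlamα : lam ≤ α' := hlam ▸ min_le_left _ _
    have hlamγ : lam ≤ γ' := hlam ▸ min_le_right _ _
    apply hpnotint
    apply interior4 (α := α' - lam*(1-s)) (β := lam*t) (γ := γ' - lam*s)
      (δ := β' + lam*(1-t)) hgV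
    · have := mul_pos hlam0 hs0; linarith
    · exact mul_pos hlam0 ht0
    · have := mul_pos hlam0 (show (0:ℝ) < 1-s by linarith); linarith
    · have := mul_pos hlam0 (show (0:ℝ) < 1-t by linarith); linarith
    · ring_nf; linarith [h4]
    · linear_combination h5 - lam * hE1
    · linear_combination h6 - lam * hE2

private lemma frontier_hit' {K : Set (ℝ × ℝ)} (hK : IsClosed K) {X Y : ℝ × ℝ}
    {t₂ : ℝ}
    (hmem : t₂ ∈ {t : ℝ | t ∈ Icc (0:ℝ) 1 ∧ X + t • (Y - X) ∈ K})
    (ht₂ : t₂ = sSup {t : ℝ | t ∈ Icc (0:ℝ) 1 ∧ X + t • (Y - X) ∈ K})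
    (hlt : t₂ < 1) : X + t₂ • (Y - X) ∈ frontier K := by
  set I := {t : ℝ | t ∈ Icc (0:ℝ) 1 ∧ X + t • (Y - X) ∈ K} with hI
  have hbdd : BddAbove I := ⟨1, fun t ht => ht.1.2⟩
  rw [frontier_eq_closure_inter_closure]
  refine ⟨subset_closure hmem.2, ?_⟩
  rw [Metric.mem_closure_iff]
  intro ε hε
  set δ : ℝ := min ((1-t₂)/2) (ε/(2*(‖Y - X‖+1))) with hδ
  have hnorm : (0:ℝ) < ‖Y - X‖ + 1 := by positivity
  have hδpos : 0 < δ := lt_min (by linarith) (by positivity)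
  have hδle : δ ≤ (1-t₂)/2 := min_le_left _ _
  have hδle2 : δ ≤ ε/(2*(‖Y - X‖+1)) := min_le_right _ _
  refine ⟨X + (t₂ + δ) • (Y - X), ?_, ?_⟩
  · intro hc
    have hIc : t₂ + δ ∉ I := notMem_of_csSup_lt (by rw [← ht₂]; linarith) hbdd
    exact hIc ⟨⟨by linarith [hmem.1.1], by linarith⟩, hc⟩
  · rw [dist_eq_norm]
    have : X + t₂ • (Y - X) - (X + (t₂ + δ) • (Y - X)) = (-δ) • (Y - X) := by
      rw [add_smul]; module
    rw [this, norm_smul, Real.norm_eq_abs, abs_neg, abs_of_pos hδpos]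
    calc δ * ‖Y - X‖ ≤ (ε/(2*(‖Y - X‖+1))) * ‖Y - X‖ := by
          apply mul_le_mul_of_nonneg_right hδle2 (norm_nonneg _)
    _ < ε := by
          rw [div_mul_eq_mul_div, div_lt_iff₀ (by positivity)]
          nlinarith [norm_nonneg (Y - X), hε]

private lemma support_three {P R S : ℝ × ℝ} (hPR : P ≠ R) :
    ∃ w : ℝ × ℝ, ¬(w.1 = 0 ∧ w.2 = 0) ∧
      w.1*(R.1-P.1) + w.2*(R.2-P.2) ≤ 0 ∧ w.1*(S.1-P.1) + w.2*(S.2-P.2) ≤ 0 := by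
  have hne : ¬(R.1 - P.1 = 0 ∧ R.2 - P.2 = 0) := by
    rintro ⟨h1, h2⟩
    exact hPR (Prod.ext_iff.2 ⟨by linarith, by linarith⟩)
  rcases le_or_gt ((R.1-P.1)*(S.2-P.2) - (R.2-P.2)*(S.1-P.1)) 0 with hcr | hcr
  · refine ⟨(-(R.2-P.2), R.1-P.1), ?_, by simp; ring_nf; nlinarith [hcr], by simp; nlinarith [hcr]⟩
    rintro ⟨h1, h2⟩
    simp at h1 h2
    exact hne ⟨h2, by linarith⟩
  · refine ⟨(R.2-P.2, -(R.1-P.1)), ?_, by simp; nlinarith [hcr], by simp; nlinarith [hcr]⟩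
    rintro ⟨h1, h2⟩
    simp at h1 h2
    exact hne ⟨by linarith, h1⟩

set_option maxHeartbeats 4000000 in
/-- Let `a, v, b, u` form a convex quadrilateral (in this cyclic order, so that the
diagonals `(u,v)` and `(a,b)` cross) in a planar straight-line drawing of `G`, with no
other vertex of `G` inside the quadrilateral.  If `G` contains the edges `(a,v)`,
`(v,b)`, `(a,u)`, `(u,b)`, `(u,v)` but not `(a,b)`, then removing edge `(u,v)` and
adding the straight-line segment `(a,b)` yields a planar straight-line drawing, and
the triangle `a, b, v` contains no vertex of the graph in its interior. -/
theorem swap_diagonal_in_empty_convex_quadrilateral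
    {V : Type*} (G : SimpleGraph V) (pos : V → ℝ × ℝ)
    (hplanar : PlanarPos G pos)
    (a b v u : V)
    (hav : G.Adj a v) (hvb : G.Adj v b) (hau : G.Adj a u) (hub : G.Adj u b)
    (huv : G.Adj u v) (hab : ¬G.Adj a b)
    (hconvex : (openSegment ℝ (pos u) (pos v) ∩ openSegment ℝ (pos a) (pos b)).Nonempty)
    (hempty : ∀ x : V,
      pos x ∈ convexHull ℝ ({pos a, pos v, pos b, pos u} : Set (ℝ × ℝ)) →
        x ∈ ({a, v, b, u} : Set V)) :
    PlanarPos ((G.deleteEdges {s(u, v)}) ⊔ SimpleGraph.fromEdgeSet {s(a, b)}) pos ∧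
      ∀ x : V, pos x ∉ interior (convexHull ℝ ({pos a, pos b, pos v} : Set (ℝ × ℝ))) := by
  have hinj : Function.Injective pos := hplanar.1
  have crossOld : ∀ x y x' y' : V, G.Adj x y → G.Adj x' y' → s(x,y) ≠ s(x',y') →
      ∀ z : ℝ × ℝ, z ∈ segment ℝ (pos x) (pos y) → z ∈ segment ℝ (pos x') (pos y') →
      ∃ m : V, (m = x ∨ m = y) ∧ (m = x' ∨ m = y') ∧ pos m = z := by
    intro x y x' y' hxy hxy' hne z hz hz'
    obtain ⟨m, hm, hmz⟩ := hplanar.2 s(x,y) (G.mem_edgeSet.2 hxy) s(x',y')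
      (G.mem_edgeSet.2 hxy') hne x y x' y' rfl rfl ⟨hz, hz'⟩
    exact ⟨m, Sym2.mem_iff.1 hm.1, Sym2.mem_iff.1 hm.2, hmz⟩
  obtain ⟨c, hcUV, hcAB⟩ := hconvex
  have hneav : s(a,v) ≠ s(u,v) := by
    intro hcon
    rcases Sym2.eq_iff.1 hcon with ⟨h1, _⟩ | ⟨h1, _⟩
    · exact hau.ne h1
    · exact hav.ne h1
  have hnevb : s(v,b) ≠ s(u,v) := by
    intro hcon
    rcases Sym2.eq_iff.1 hcon with ⟨h1, h2⟩ | ⟨_, h2⟩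
    · exact huv.ne h1.symm
    · exact hub.ne h2.symm
  have hab' : a ≠ b := by
    intro h
    rw [← h] at hcAB
    rw [openSegment_same] at hcAB
    have hca : c = pos a := hcAB
    obtain ⟨m, hm1, hm2, hm3⟩ := crossOld a v u v hav huv hneav c
      (by rw [hca]; exact left_mem_segment ℝ (pos a) (pos v))
      (openSegment_subset_segment ℝ _ _ hcUV)
    rcases hm2 with rfl | rfl
    · rcases hm1 with h' | h'
      · exact hau.ne h'.symm
      · exact huv.ne h'
    · exact hav.ne (hinj (hm3.trans hca)).symm
  obtain ⟨tc, htc0, htc1, hcU1, hcU2⟩ := openSeg_coords hcUV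
  obtain ⟨sc, hsc0, hsc1, hcA1, hcA2⟩ := openSeg_coords hcAB
  obtain ⟨gV, hgVd⟩ : ∃ r : ℝ, r = ((pos b).1-(pos a).1)*((pos v).2-(pos a).2) -
      ((pos b).2-(pos a).2)*((pos v).1-(pos a).1) := ⟨_, rfl⟩
  obtain ⟨gU, hgUd⟩ : ∃ r : ℝ, r = ((pos b).1-(pos a).1)*((pos u).2-(pos a).2) -
      ((pos b).2-(pos a).2)*((pos u).1-(pos a).1) := ⟨_, rfl⟩
  have hE1 : (1-tc)*(pos u).1 + tc*(pos v).1 = (1-sc)*(pos a).1 + sc*(pos b).1 := by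
    rw [← hcU1, ← hcA1]
  have hE2 : (1-tc)*(pos u).2 + tc*(pos v).2 = (1-sc)*(pos a).2 + sc*(pos b).2 := by
    rw [← hcU2, ← hcA2]
  have hrel : (1-tc)*gU + tc*gV = 0 := by
    rw [hgUd, hgVd]
    linear_combination ((pos b).1-(pos a).1) * hE2 - ((pos b).2-(pos a).2) * hE1
  have hnotboth : ¬ (gV = 0 ∧ gU = 0) := by
    rintro ⟨hV0, hU0⟩
    have hABp : pos a ≠ pos b := fun h => hab' (hinj h)
    rw [hgVd] at hV0
    obtain ⟨ν, hν1, hν2⟩ := line_param hABp hV0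
    rcases le_or_gt sc ν with hcase | hcase
    · have hν0 : 0 < ν := lt_of_lt_of_le hsc0 hcase
      have hseg : c ∈ segment ℝ (pos a) (pos v) := by
        have hνne : ν ≠ 0 := hν0.ne'
        apply seg_mk (t := sc/ν) (by positivity) ((div_le_one hν0).2 hcase)
        · rw [hν1]; field_simp
          first
          | linear_combination ν * hcA1
          | linear_combination (-ν) * hcA1
        · rw [hν2]; field_simp
          first
          | linear_combination ν * hcA2
          | linear_combination (-ν) * hcA2
      obtain ⟨m, hm1, hm2, hm3⟩ := crossOld a v u v hav huv hneav c hseg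
        (openSegment_subset_segment ℝ _ _ hcUV)
      rcases hm2 with rfl | rfl
      · rcases hm1 with h' | h'
        · exact hau.ne h'.symm
        · exact huv.ne h'
      · rw [← hm3] at hcUV
        exact huv.ne (hinj (right_mem_openSegment_iff.1 hcUV))
    · have hν1lt : ν < 1 := lt_trans hcase hsc1
      have hseg : c ∈ segment ℝ (pos v) (pos b) := by
        have hνne : (1:ℝ) - ν ≠ 0 := by intro h'; rw [sub_eq_zero] at h'; linarith
        apply seg_mk (t := (sc-ν)/(1-ν)) (div_nonneg (by linarith) (by linarith))
          ((div_le_one (by linarith)).2 (by linarith))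
        · rw [hν1]; field_simp
          first
          | linear_combination (1-ν) * hcA1
          | linear_combination (ν-1) * hcA1
        · rw [hν2]; field_simp
          first
          | linear_combination (1-ν) * hcA2
          | linear_combination (ν-1) * hcA2
      obtain ⟨m, hm1, hm2, hm3⟩ := crossOld v b u v hvb huv hnevb c hseg
        (openSegment_subset_segment ℝ _ _ hcUV)
      rcases hm2 with rfl | rfl
      · rcases hm1 with h' | h'
        · exact huv.ne h'
        · exact hub.ne h'
      · rw [← hm3] at hcUV
        exact huv.ne (hinj (right_mem_openSegment_iff.1 hcUV))
  have hgVne' : gV ≠ 0 := by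
    intro h0
    apply hnotboth
    refine ⟨h0, ?_⟩
    rw [h0, mul_zero, add_zero] at hrel
    rcases mul_eq_zero.1 hrel with h | h
    · linarith
    · exact h
  have hgUne' : gU ≠ 0 := by
    intro h0
    apply hnotboth
    refine ⟨?_, h0⟩
    rw [h0, mul_zero, zero_add] at hrel
    rcases mul_eq_zero.1 hrel with h | h
    · linarith
    · exact h
  have hgVne : ((pos b).1-(pos a).1)*((pos v).2-(pos a).2) -
      ((pos b).2-(pos a).2)*((pos v).1-(pos a).1) ≠ 0 := by rw [← hgVd]; exact hgVne'
  have hgUne : ((pos b).1-(pos a).1)*((pos u).2-(pos a).2) -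
      ((pos b).2-(pos a).2)*((pos u).1-(pos a).1) ≠ 0 := by rw [← hgUd]; exact hgUne'
  have segABQ : segment ℝ (pos a) (pos b) ⊆
      convexHull ℝ ({pos a, pos v, pos b, pos u} : Set (ℝ × ℝ)) := by
    intro z hz
    obtain ⟨τ, h0, h1, hw1, hw2⟩ := seg_coords hz
    exact hull4_mk (α := 1-τ) (β := 0) (γ := τ) (δ := 0) (by linarith) le_rfl h0 le_rfl
      (by ring) (by rw [hw1]; ring) (by rw [hw2]; ring)
  -- the main geometric lemma: the new edge a-b does not cross any old edge
  have mainX : ∀ x y : V, G.Adj x y → s(x, y) ≠ s(u, v) →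
      ∀ z : ℝ × ℝ, z ∈ segment ℝ (pos a) (pos b) → z ∈ segment ℝ (pos x) (pos y) →
      ∃ m : V, (m = a ∨ m = b) ∧ (m = x ∨ m = y) ∧ pos m = z := by
    intro x y hxy hneuv z hzAB hzXY
    have hz3 : z = pos a ∨ z = pos b ∨ z ∈ openSegment ℝ (pos a) (pos b) := by
      rw [← insert_endpoints_openSegment] at hzAB
      simpa using hzAB
    rcases hz3 with hzA | hzB | hzo
    · by_cases hax : a = x ∨ a = y
      · exact ⟨a, Or.inl rfl, hax, hzA.symm⟩
      · push_neg at hax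
        exfalso
        have hne : s(x, y) ≠ s(a, v) := by
          intro hcon
          rcases Sym2.eq_iff.1 hcon with ⟨h1, _⟩ | ⟨_, h2⟩
          · exact hax.1 h1.symm
          · exact hax.2 h2.symm
        obtain ⟨m, hm1, hm2, hm3⟩ := crossOld x y a v hxy hav hne z hzXY
          (by rw [hzA]; exact left_mem_segment ℝ (pos a) (pos v))
        rcases hm2 with rfl | rfl
        · rcases hm1 with h' | h'
          · exact hax.1 h'
          · exact hax.2 h'
        · exact hav.ne (hinj (hm3.trans hzA)).symm
    · by_cases hbx : b = x ∨ b = y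
      · exact ⟨b, Or.inr rfl, hbx, hzB.symm⟩
      · push_neg at hbx
        exfalso
        have hne : s(x, y) ≠ s(v, b) := by
          intro hcon
          rcases Sym2.eq_iff.1 hcon with ⟨_, h2⟩ | ⟨h1, _⟩
          · exact hbx.2 h2.symm
          · exact hbx.1 h1.symm
        obtain ⟨m, hm1, hm2, hm3⟩ := crossOld x y v b hxy hvb hne z hzXY
          (by rw [hzB]; exact right_mem_segment ℝ (pos v) (pos b))
        rcases hm2 with rfl | rfl
        · exact hvb.ne (hinj (hm3.trans hzB))
        · rcases hm1 with h' | h'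
          · exact hbx.1 h'
          · exact hbx.2 h'
    · exfalso
      obtain ⟨μ, hμ0, hμ1, hz1, hz2⟩ := openSeg_coords hzo
      have hgz : ((pos b).1-(pos a).1)*(z.2-(pos a).2) -
          ((pos b).2-(pos a).2)*(z.1-(pos a).1) = 0 := by
        linear_combination ((pos b).1-(pos a).1)*hz2 - ((pos b).2-(pos a).2)*hz1
      have hsideA : ∀ P : ℝ × ℝ,
          ((pos b).1-(pos a).1)*(P.2-(pos a).2) - ((pos b).2-(pos a).2)*(P.1-(pos a).1) ≠ 0 →
          z ∈ segment ℝ (pos a) P → False := by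
        intro P hgP hseg
        obtain ⟨τ, hτ0, hτ1, hw1, hw2⟩ := seg_coords hseg
        have h0 : τ * (((pos b).1-(pos a).1)*(P.2-(pos a).2) -
            ((pos b).2-(pos a).2)*(P.1-(pos a).1)) = 0 := by
          first
          | linear_combination hgz - ((pos b).1-(pos a).1)*hw2 + ((pos b).2-(pos a).2)*hw1
          | linear_combination ((pos b).1-(pos a).1)*hw2 - ((pos b).2-(pos a).2)*hw1 - hgz
        have hτz : τ = 0 := by
          rcases mul_eq_zero.1 h0 with h' | h'
          · exact h'
          · exact absurd h' hgP
        have hzA : z = pos a := by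
          apply Prod.ext_iff.2
          refine ⟨?_, ?_⟩
          · rw [hw1, hτz]; ring
          · rw [hw2, hτz]; ring
        rw [hzA] at hzo
        exact hab' (hinj (left_mem_openSegment_iff.1 hzo))
      have hsideB : ∀ P : ℝ × ℝ,
          ((pos b).1-(pos a).1)*(P.2-(pos a).2) - ((pos b).2-(pos a).2)*(P.1-(pos a).1) ≠ 0 →
          z ∈ segment ℝ P (pos b) → False := by
        intro P hgP hseg
        obtain ⟨τ, hτ0, hτ1, hw1, hw2⟩ := seg_coords hseg
        have h0 : (1-τ) * (((pos b).1-(pos a).1)*(P.2-(pos a).2) -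
            ((pos b).2-(pos a).2)*(P.1-(pos a).1)) = 0 := by
          first
          | linear_combination hgz - ((pos b).1-(pos a).1)*hw2 + ((pos b).2-(pos a).2)*hw1
          | linear_combination ((pos b).1-(pos a).1)*hw2 - ((pos b).2-(pos a).2)*hw1 - hgz
        have hτz : τ = 1 := by
          rcases mul_eq_zero.1 h0 with h' | h'
          · linarith
          · exact absurd h' hgP
        have hzB : z = pos b := by
          apply Prod.ext_iff.2
          refine ⟨?_, ?_⟩
          · rw [hw1, hτz]; ring
          · rw [hw2, hτz]; ring
        rw [hzB] at hzo
        exact hab' (hinj (right_mem_openSegment_iff.1 hzo))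
      by_cases hcorner : (x = a ∨ x = v ∨ x = b ∨ x = u) ∧ (y = a ∨ y = v ∨ y = b ∨ y = u)
      · obtain ⟨hcx, hcy⟩ := hcorner
        rcases hcx with h1 | h1 | h1 | h1 <;> rcases hcy with h2 | h2 | h2 | h2 <;>
          rw [h1, h2] at hxy hzXY hneuv
        · exact hxy.ne rfl
        · exact hsideA (pos v) hgVne hzXY
        · exact hab hxy
        · exact hsideA (pos u) hgUne hzXY
        · exact hsideA (pos v) hgVne (by rw [segment_symm] at hzXY; exact hzXY)
        · exact hxy.ne rfl
        · exact hsideB (pos v) hgVne hzXY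
        · exact hneuv Sym2.eq_swap
        · exact hab hxy.symm
        · exact hsideB (pos v) hgVne (by rw [segment_symm] at hzXY; exact hzXY)
        · exact hxy.ne rfl
        · exact hsideB (pos u) hgUne (by rw [segment_symm] at hzXY; exact hzXY)
        · exact hsideA (pos u) hgUne (by rw [segment_symm] at hzXY; exact hzXY)
        · exact hneuv rfl
        · exact hsideB (pos u) hgUne hzXY
        · exact hxy.ne rfl
      · -- at least one endpoint is not a corner of the quadrilateral
        have hXY : pos x ≠ pos y := fun h => hxy.ne (hinj h)
        have hQclosed : IsClosed (convexHull ℝ ({pos a, pos v, pos b, pos u} : Set (ℝ × ℝ))) :=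
          ((Set.toFinite _).isCompact_convexHull ℝ).isClosed
        rw [segment_eq_image'] at hzXY
        obtain ⟨rz, hrzIcc, hφz0⟩ := hzXY
        have hφz : pos x + rz • (pos y - pos x) = z := hφz0
        have hrzmem : rz ∈ {r : ℝ | r ∈ Icc (0:ℝ) 1 ∧ pos x + r • (pos y - pos x) ∈
            convexHull ℝ ({pos a, pos v, pos b, pos u} : Set (ℝ × ℝ))} :=
          ⟨hrzIcc, by rw [hφz]; exact segABQ hzAB⟩
        set I := {r : ℝ | r ∈ Icc (0:ℝ) 1 ∧ pos x + r • (pos y - pos x) ∈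
            convexHull ℝ ({pos a, pos v, pos b, pos u} : Set (ℝ × ℝ))} with hIdef
        have hIbddb : BddBelow I := ⟨0, fun r hr => hr.1.1⟩
        have hIbdda : BddAbove I := ⟨1, fun r hr => hr.1.2⟩
        have hIne : I.Nonempty := ⟨rz, hrzmem⟩
        have hIclosed : IsClosed I := by
          have h1 : I = Icc (0:ℝ) 1 ∩ ((fun r : ℝ => pos x + r • (pos y - pos x)) ⁻¹'
              (convexHull ℝ ({pos a, pos v, pos b, pos u} : Set (ℝ × ℝ)))) := rfl
          rw [h1]
          exact isClosed_Icc.inter (hQclosed.preimage (continuous_const.add (continuous_id.smul continuous_const)))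
        obtain ⟨t1, ht1def⟩ : ∃ r : ℝ, r = sInf I := ⟨_, rfl⟩
        obtain ⟨t2, ht2def⟩ : ∃ r : ℝ, r = sSup I := ⟨_, rfl⟩
        have ht1I : t1 ∈ I := ht1def ▸ hIclosed.csInf_mem hIne hIbddb
        have ht2I : t2 ∈ I := ht2def ▸ hIclosed.csSup_mem hIne hIbdda
        have hclass : ∀ p : ℝ × ℝ,
            p ∈ frontier (convexHull ℝ ({pos a, pos v, pos b, pos u} : Set (ℝ × ℝ))) →
            p ∈ segment ℝ (pos x) (pos y) →
            ∃ m, (m = x ∨ m = y) ∧ (m = a ∨ m = v ∨ m = b ∨ m = u) ∧ pos m = p := by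
          intro p hpf hpseg
          have hsides := frontier_sub_sides htc0 htc1 hsc0 hsc1 hcU1 hcU2 hcA1 hcA2 hgVne hpf
          rcases hsides with ((hAV | hVB) | hBU) | hUA
          · have hne : s(x,y) ≠ s(a,v) := by
              intro hcon
              apply hcorner
              rcases Sym2.eq_iff.1 hcon with ⟨rfl, rfl⟩ | ⟨rfl, rfl⟩
              · exact ⟨Or.inl rfl, Or.inr (Or.inl rfl)⟩
              · exact ⟨Or.inr (Or.inl rfl), Or.inl rfl⟩
            obtain ⟨m, hm1, hm2, hm3⟩ := crossOld x y a v hxy hav hne p hpseg hAV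
            refine ⟨m, hm1, ?_, hm3⟩
            rcases hm2 with rfl | rfl
            · exact Or.inl rfl
            · exact Or.inr (Or.inl rfl)
          · have hne : s(x,y) ≠ s(v,b) := by
              intro hcon
              apply hcorner
              rcases Sym2.eq_iff.1 hcon with ⟨rfl, rfl⟩ | ⟨rfl, rfl⟩
              · exact ⟨Or.inr (Or.inl rfl), Or.inr (Or.inr (Or.inl rfl))⟩
              · exact ⟨Or.inr (Or.inr (Or.inl rfl)), Or.inr (Or.inl rfl)⟩
            obtain ⟨m, hm1, hm2, hm3⟩ := crossOld x y v b hxy hvb hne p hpseg hVB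
            refine ⟨m, hm1, ?_, hm3⟩
            rcases hm2 with rfl | rfl
            · exact Or.inr (Or.inl rfl)
            · exact Or.inr (Or.inr (Or.inl rfl))
          · have hne : s(x,y) ≠ s(u,b) := by
              intro hcon
              apply hcorner
              rcases Sym2.eq_iff.1 hcon with ⟨rfl, rfl⟩ | ⟨rfl, rfl⟩
              · exact ⟨Or.inr (Or.inr (Or.inr rfl)), Or.inr (Or.inr (Or.inl rfl))⟩
              · exact ⟨Or.inr (Or.inr (Or.inl rfl)), Or.inr (Or.inr (Or.inr rfl))⟩
            obtain ⟨m, hm1, hm2, hm3⟩ := crossOld x y u b hxy hub hne p hpseg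
              (by rw [segment_symm] at hBU; exact hBU)
            refine ⟨m, hm1, ?_, hm3⟩
            rcases hm2 with rfl | rfl
            · exact Or.inr (Or.inr (Or.inr rfl))
            · exact Or.inr (Or.inr (Or.inl rfl))
          · have hne : s(x,y) ≠ s(a,u) := by
              intro hcon
              apply hcorner
              rcases Sym2.eq_iff.1 hcon with ⟨rfl, rfl⟩ | ⟨rfl, rfl⟩
              · exact ⟨Or.inl rfl, Or.inr (Or.inr (Or.inr rfl))⟩
              · exact ⟨Or.inr (Or.inr (Or.inr rfl)), Or.inl rfl⟩
            obtain ⟨m, hm1, hm2, hm3⟩ := crossOld x y a u hxy hau hne p hpseg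
              (by rw [segment_symm] at hUA; exact hUA)
            refine ⟨m, hm1, ?_, hm3⟩
            rcases hm2 with rfl | rfl
            · exact Or.inl rfl
            · exact Or.inr (Or.inr (Or.inr rfl))
        have hend1 : ∃ m, (m = x ∨ m = y) ∧ (m = a ∨ m = v ∨ m = b ∨ m = u) ∧
            pos m = pos x + t1 • (pos y - pos x) := by
          rcases eq_or_lt_of_le ht1I.1.1 with h0 | h0
          · have hXQ : pos x ∈ convexHull ℝ ({pos a, pos v, pos b, pos u} : Set (ℝ × ℝ)) := by
              have h' := ht1I.2
              rw [← h0] at h'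
              simpa using h'
            have hx4 : x = a ∨ x = v ∨ x = b ∨ x = u := by simpa using hempty x hXQ
            exact ⟨x, Or.inl rfl, hx4, by rw [← h0]; simp⟩
          · have hmem' := ht1I
            rw [hIdef] at hmem'
            have hinf' : t1 = sInf {r : ℝ | r ∈ Icc (0:ℝ) 1 ∧ pos x + r • (pos y - pos x) ∈
                convexHull ℝ ({pos a, pos v, pos b, pos u} : Set (ℝ × ℝ))} := by
              rw [ht1def]
            have hpf := frontier_hit hQclosed hmem' hinf' h0
            exact hclass _ hpf (by rw [segment_eq_image']; exact ⟨t1, ht1I.1, rfl⟩)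
        have hend2 : ∃ m, (m = x ∨ m = y) ∧ (m = a ∨ m = v ∨ m = b ∨ m = u) ∧
            pos m = pos x + t2 • (pos y - pos x) := by
          rcases eq_or_lt_of_le ht2I.1.2 with h0 | h0
          · have hYQ : pos y ∈ convexHull ℝ ({pos a, pos v, pos b, pos u} : Set (ℝ × ℝ)) := by
              have h' := ht2I.2
              rw [h0, one_smul] at h'
              simpa using h'
            have hy4 : y = a ∨ y = v ∨ y = b ∨ y = u := by simpa using hempty y hYQ
            refine ⟨y, Or.inr rfl, hy4, ?_⟩
            rw [h0, one_smul]
            abel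
          · have hmem' := ht2I
            rw [hIdef] at hmem'
            have hsup' : t2 = sSup {r : ℝ | r ∈ Icc (0:ℝ) 1 ∧ pos x + r • (pos y - pos x) ∈
                convexHull ℝ ({pos a, pos v, pos b, pos u} : Set (ℝ × ℝ))} := by
              rw [ht2def]
            have hpf := frontier_hit' hQclosed hmem' hsup' h0
            exact hclass _ hpf (by rw [segment_eq_image']; exact ⟨t2, ht2I.1, rfl⟩)
        obtain ⟨m1, hm1xy, hm1c, hm1p⟩ := hend1
        obtain ⟨m2, hm2xy, hm2c, hm2p⟩ := hend2
        have hm12 : m1 = m2 := by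
          rcases not_and_or.1 hcorner with hxn | hyn
          · have e1 : m1 = y := by
              rcases hm1xy with rfl | rfl
              · exact absurd hm1c hxn
              · rfl
            have e2 : m2 = y := by
              rcases hm2xy with rfl | rfl
              · exact absurd hm2c hxn
              · rfl
            rw [e1, e2]
          · have e1 : m1 = x := by
              rcases hm1xy with rfl | rfl
              · rfl
              · exact absurd hm1c hyn
            have e2 : m2 = x := by
              rcases hm2xy with rfl | rfl
              · rfl
              · exact absurd hm2c hyn
            rw [e1, e2]
        have ht12 : t1 = t2 := by
          have heq : pos x + t1 • (pos y - pos x) = pos x + t2 • (pos y - pos x) := by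
            rw [← hm1p, hm12, hm2p]
          have h3 := add_left_cancel heq
          have h2 : (t1 - t2) • (pos y - pos x) = 0 := by
            rw [sub_smul, h3, sub_self]
          rcases smul_eq_zero.1 h2 with h' | h'
          · linarith [sub_eq_zero.1 h']
          · exact absurd (sub_eq_zero.1 h') (fun hc => hXY hc.symm)
        have hrzt : rz = t1 := by
          have hle1 : t1 ≤ rz := ht1def ▸ csInf_le hIbddb hrzmem
          have hle2 : rz ≤ t2 := ht2def ▸ le_csSup hIbdda hrzmem
          linarith [ht12]
        have hzm : pos m1 = z := by rw [hm1p, ← hφz, hrzt]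
        rcases hm1c with rfl | rfl | rfl | rfl
        · rw [← hzm] at hzo
          exact hab' (hinj (left_mem_openSegment_iff.1 hzo))
        · apply hgVne
          rw [← hzm] at hgz
          exact hgz
        · rw [← hzm] at hzo
          exact hab' (hinj (right_mem_openSegment_iff.1 hzo))
        · apply hgUne
          rw [← hzm] at hgz
          exact hgz
  constructor
  · refine ⟨hplanar.1, ?_⟩
    intro e₁ he₁ e₂ he₂ hne x' y' x'' y'' he₁' he₂'
    rw [SimpleGraph.edgeSet_sup, SimpleGraph.edgeSet_deleteEdges,
      SimpleGraph.edgeSet_fromEdgeSet] at he₁ he₂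
    rcases he₁ with he₁old | he₁new <;> rcases he₂ with he₂old | he₂new
    · exact hplanar.2 e₁ he₁old.1 e₂ he₂old.1 hne x' y' x'' y'' he₁' he₂'
    · have he₂ab : e₂ = s(a,b) := he₂new.1
      have hG1 : G.Adj x' y' := G.mem_edgeSet.1 (he₁' ▸ he₁old.1)
      have hne1 : s(x',y') ≠ s(u,v) := fun hc =>
        he₁old.2 (mem_singleton_iff.2 (he₁'.trans hc))
      intro z hz
      have hzab : z ∈ segment ℝ (pos a) (pos b) := by
        have hq : s(x'', y'') = s(a, b) := by rw [← he₂', he₂ab]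
        rcases Sym2.eq_iff.1 hq with ⟨rfl, rfl⟩ | ⟨rfl, rfl⟩
        · exact hz.2
        · have h' := hz.2
          rw [segment_symm] at h'
          exact h'
      obtain ⟨m, hm1, hm2, hm3⟩ := mainX x' y' hG1 hne1 z hzab hz.1
      exact ⟨m, ⟨by rw [he₁']; exact Sym2.mem_iff.2 hm2,
        by rw [he₂ab]; exact Sym2.mem_iff.2 hm1⟩, hm3⟩
    · have he₁ab : e₁ = s(a,b) := he₁new.1
      have hG2 : G.Adj x'' y'' := G.mem_edgeSet.1 (he₂' ▸ he₂old.1)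
      have hne2 : s(x'',y'') ≠ s(u,v) := fun hc =>
        he₂old.2 (mem_singleton_iff.2 (he₂'.trans hc))
      intro z hz
      have hzab : z ∈ segment ℝ (pos a) (pos b) := by
        have hq : s(x', y') = s(a, b) := by rw [← he₁', he₁ab]
        rcases Sym2.eq_iff.1 hq with ⟨rfl, rfl⟩ | ⟨rfl, rfl⟩
        · exact hz.1
        · have h' := hz.1
          rw [segment_symm] at h'
          exact h'
      obtain ⟨m, hm1, hm2, hm3⟩ := mainX x'' y'' hG2 hne2 z hzab hz.2
      exact ⟨m, ⟨by rw [he₁ab]; exact Sym2.mem_iff.2 hm1,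
        by rw [he₂']; exact Sym2.mem_iff.2 hm2⟩, hm3⟩
    · exact absurd (he₁new.1.trans he₂new.1.symm) hne
  · intro w
    by_cases hw4 : w = a ∨ w = v ∨ w = b ∨ w = u
    · rcases hw4 with h | h | h | h <;> rw [h]
      · obtain ⟨wv, hwv0, hwv1, hwv2⟩ :=
          support_three (P := pos a) (R := pos b) (S := pos v) (fun h => hab' (hinj h))
        apply support_interior hwv0
        intro q hq
        rcases (by simpa using hq : q = pos a ∨ q = pos b ∨ q = pos v) with rfl | rfl | rfl
        · exact le_refl _
        · linarith [hwv1]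
        · linarith [hwv2]
      · obtain ⟨wv, hwv0, hwv1, hwv2⟩ :=
          support_three (P := pos v) (R := pos a) (S := pos b)
            (fun h => hav.ne (hinj h).symm)
        apply support_interior hwv0
        intro q hq
        rcases (by simpa using hq : q = pos a ∨ q = pos b ∨ q = pos v) with rfl | rfl | rfl
        · linarith [hwv1]
        · linarith [hwv2]
        · exact le_refl _
      · obtain ⟨wv, hwv0, hwv1, hwv2⟩ :=
          support_three (P := pos b) (R := pos a) (S := pos v)
            (fun h => hab' (hinj h.symm))
        apply support_interior hwv0
        intro q hq
        rcases (by simpa using hq : q = pos a ∨ q = pos b ∨ q = pos v) with rfl | rfl | rfl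
        · linarith [hwv1]
        · exact le_refl _
        · linarith [hwv2]
      · -- w = u
        obtain ⟨d1, hd1⟩ : ∃ r : ℝ, r = (pos b).1 - (pos a).1 := ⟨_, rfl⟩
        obtain ⟨d2, hd2⟩ : ∃ r : ℝ, r = (pos b).2 - (pos a).2 := ⟨_, rfl⟩
        obtain ⟨wv, hwvdef⟩ : ∃ p : ℝ × ℝ, p = if gV ≤ 0 then ((-d2, d1) : ℝ × ℝ)
            else (d2, -d1) := ⟨_, rfl⟩
        have hwvcase : (wv.1 = -d2 ∧ wv.2 = d1) ∨ (wv.1 = d2 ∧ wv.2 = -d1) := by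
          rw [hwvdef]
          split_ifs
          · exact Or.inl ⟨rfl, rfl⟩
          · exact Or.inr ⟨rfl, rfl⟩
        have hwv0 : ¬(wv.1 = 0 ∧ wv.2 = 0) := by
          rintro ⟨h1, h2⟩
          apply hab'
          apply hinj
          apply Prod.ext_iff.2
          rcases hwvcase with ⟨e1, e2⟩ | ⟨e1, e2⟩ <;>
            rw [e1] at h1 <;> rw [e2] at h2 <;>
            exact ⟨by rw [hd1] at *; linarith, by rw [hd2] at *; linarith⟩
        have hYneg : wv.1*((pos v).1-(pos a).1) + wv.2*((pos v).2-(pos a).2) ≤ 0 := by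
          rw [hwvdef]
          split_ifs with hsv
          · have he : (-d2)*((pos v).1-(pos a).1) + d1*((pos v).2-(pos a).2) = gV := by
              rw [hgVd, hd1, hd2]; ring
            show (-d2)*((pos v).1-(pos a).1) + d1*((pos v).2-(pos a).2) ≤ 0
            linarith [he, hsv]
          · have he : d2*((pos v).1-(pos a).1) + (-d1)*((pos v).2-(pos a).2) = -gV := by
              rw [hgVd, hd1, hd2]; ring
            push_neg at hsv
            show d2*((pos v).1-(pos a).1) + (-d1)*((pos v).2-(pos a).2) ≤ 0
            linarith [he, hsv]
        have hB' : wv.1*((pos b).1-(pos a).1) + wv.2*((pos b).2-(pos a).2) = 0 := by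
          rcases hwvcase with ⟨e1, e2⟩ | ⟨e1, e2⟩ <;> rw [e1, e2, hd1, hd2] <;> ring
        have hX0 : 0 ≤ wv.1*((pos u).1-(pos a).1) + wv.2*((pos u).2-(pos a).2) := by
          obtain ⟨X, hX⟩ : ∃ r : ℝ,
              r = wv.1*((pos u).1-(pos a).1) + wv.2*((pos u).2-(pos a).2) := ⟨_, rfl⟩
          obtain ⟨Y, hY⟩ : ∃ r : ℝ,
              r = wv.1*((pos v).1-(pos a).1) + wv.2*((pos v).2-(pos a).2) := ⟨_, rfl⟩
          have hXY : (1-tc)*X + tc*Y = 0 := by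
            rw [hX, hY]
            first
            | linear_combination wv.1 * hE1 + wv.2 * hE2 + sc * hB'
            | linear_combination wv.1 * hE1 + wv.2 * hE2 - sc * hB'
            | linear_combination (-wv.1) * hE1 + (-wv.2) * hE2 + sc * hB'
            | linear_combination (-wv.1) * hE1 + (-wv.2) * hE2 - sc * hB'
          have hYn : Y ≤ 0 := by rw [hY]; exact hYneg
          rw [← hX]
          nlinarith [hXY, hYn, htc0, htc1, mul_nonneg htc0.le (neg_nonneg.2 hYn),
            (show (0:ℝ) < 1 - tc by linarith)]
        apply support_interior hwv0
        intro q hq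
        rcases (by simpa using hq : q = pos a ∨ q = pos b ∨ q = pos v) with rfl | rfl | rfl
        · linarith [hX0]
        · linarith [hX0, hB']
        · linarith [hX0, hYneg]
    · intro hint
      have hsub : convexHull ℝ ({pos a, pos b, pos v} : Set (ℝ × ℝ)) ⊆
          convexHull ℝ ({pos a, pos v, pos b, pos u} : Set (ℝ × ℝ)) := by
        apply convexHull_mono
        intro q hq
        simp only [mem_insert_iff, mem_singleton_iff] at hq ⊢
        tauto
      have hw := hempty w (hsub (interior_subset hint))
      simp only [mem_insert_iff, mem_singleton_iff] at hw
      exact hw4 hw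
end

section
/- Let G be a plane graph with a quasi-contractible vertex v of degree 2 whose two neighbors a and b are joined by an edge. Then in any planar straight-line drawing of G in which the triangle on a, b, v bounds an empty face, contracting v onto a (replacing v by the point of a and removing v's edges) yields a planar straight-line drawing of G / (v,a), and this contraction, viewed as the linear motion of v along segment from pos(v) to pos(a) with all other vertices fixed, keeps all edges incident to v inside the triangle a, b, v at all times, hence preserves planarity. -/
open Set

/-- 2×2 determinant of two vectors in the plane. -/
def det2 (u w : ℝ × ℝ) : ℝ := u.1 * w.2 - u.2 * w.1

/-- barycentric coordinate of `X` w.r.t. `C` in triangle `A B C`. -/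
noncomputable def gam (A B C X : ℝ × ℝ) : ℝ :=
  det2 (B - A) (X - A) / det2 (B - A) (C - A)

/-- barycentric coordinate of `X` w.r.t. `B` in triangle `A B C`. -/
noncomputable def bet (A B C X : ℝ × ℝ) : ℝ :=
  det2 (X - A) (C - A) / det2 (B - A) (C - A)

/-- barycentric coordinate of `X` w.r.t. `A` in triangle `A B C`. -/
noncomputable def alp (A B C X : ℝ × ℝ) : ℝ := 1 - bet A B C X - gam A B C X

variable {A B C : ℝ × ℝ}

lemma gam_A : gam A B C A = 0 := by simp [gam, det2]
lemma gam_B : gam A B C B = 0 := by simp [gam, det2]; ring_nf; simp [mul_comm]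
lemma bet_A : bet A B C A = 0 := by simp [bet, det2]
lemma bet_C : bet A B C C = 0 := by simp [bet, det2]; ring_nf; simp [mul_comm]

lemma gam_C (hd : det2 (B - A) (C - A) ≠ 0) : gam A B C C = 1 := div_self hd
lemma bet_B (hd : det2 (B - A) (C - A) ≠ 0) : bet A B C B = 1 := div_self hd
lemma alp_A : alp A B C A = 1 := by simp [alp, bet_A, gam_A]
lemma alp_B (hd : det2 (B - A) (C - A) ≠ 0) : alp A B C B = 0 := by
  simp [alp, bet_B hd, gam_B]
lemma alp_C (hd : det2 (B - A) (C - A) ≠ 0) : alp A B C C = 0 := by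
  simp [alp, bet_C, gam_C hd]

lemma gam_combo {s t : ℝ} (hst : s + t = 1) (X Y : ℝ × ℝ) :
    gam A B C (s • X + t • Y) = s * gam A B C X + t * gam A B C Y := by
  have hs : s = 1 - t := by linarith
  subst hs
  simp only [gam, det2, Prod.fst_add, Prod.snd_add, Prod.smul_fst, Prod.smul_snd,
    Prod.fst_sub, Prod.snd_sub, smul_eq_mul]
  ring

lemma bet_combo {s t : ℝ} (hst : s + t = 1) (X Y : ℝ × ℝ) :
    bet A B C (s • X + t • Y) = s * bet A B C X + t * bet A B C Y := by
  have hs : s = 1 - t := by linarith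
  subst hs
  simp only [bet, det2, Prod.fst_add, Prod.snd_add, Prod.smul_fst, Prod.smul_snd,
    Prod.fst_sub, Prod.snd_sub, smul_eq_mul]
  ring

lemma alp_combo {s t : ℝ} (hst : s + t = 1) (X Y : ℝ × ℝ) :
    alp A B C (s • X + t • Y) = s * alp A B C X + t * alp A B C Y := by
  simp only [alp, bet_combo hst, gam_combo hst]
  linarith

/-- reconstruction of a point from its barycentric coordinates -/
lemma recon (hd : det2 (B - A) (C - A) ≠ 0) (X : ℝ × ℝ) :
    X = alp A B C X • A + bet A B C X • B + gam A B C X • C := by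
  have h1 : X.1 = (alp A B C X) * A.1 + (bet A B C X) * B.1 + (gam A B C X) * C.1 := by
    simp only [alp, bet, gam]
    field_simp
    simp only [det2, Prod.fst_sub, Prod.snd_sub]
    ring
  have h2 : X.2 = (alp A B C X) * A.2 + (bet A B C X) * B.2 + (gam A B C X) * C.2 := by
    simp only [alp, bet, gam]
    field_simp
    simp only [det2, Prod.fst_sub, Prod.snd_sub]
    ring
  ext
  · simpa using h1
  · simpa using h2

lemma mem_T_iff (hd : det2 (B - A) (C - A) ≠ 0) (X : ℝ × ℝ) :
    X ∈ convexHull ℝ ({A, B, C} : Set (ℝ × ℝ)) ↔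
      0 ≤ alp A B C X ∧ 0 ≤ bet A B C X ∧ 0 ≤ gam A B C X := by
  constructor
  · intro hX
    have hsub : ({A, B, C} : Set (ℝ × ℝ)) ⊆
        {Y | 0 ≤ alp A B C Y ∧ 0 ≤ bet A B C Y ∧ 0 ≤ gam A B C Y} := by
      rintro Y (rfl | rfl | rfl) <;>
        simp [alp_A, alp_B hd, alp_C hd, bet_A, bet_B hd, bet_C, gam_A, gam_B, gam_C hd]
    have hconv : Convex ℝ {Y | 0 ≤ alp A B C Y ∧ 0 ≤ bet A B C Y ∧ 0 ≤ gam A B C Y} := by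
      intro x hx y hy s t hs ht hst
      obtain ⟨hx1, hx2, hx3⟩ := hx
      obtain ⟨hy1, hy2, hy3⟩ := hy
      refine ⟨?_, ?_, ?_⟩
      · rw [alp_combo hst]
        exact add_nonneg (mul_nonneg hs hx1) (mul_nonneg ht hy1)
      · rw [bet_combo hst]
        exact add_nonneg (mul_nonneg hs hx2) (mul_nonneg ht hy2)
      · rw [gam_combo hst]
        exact add_nonneg (mul_nonneg hs hx3) (mul_nonneg ht hy3)
    exact convexHull_min hsub hconv hX
  · rintro ⟨ha, hb, hc⟩
    have hsum : alp A B C X + bet A B C X + gam A B C X = 1 := by simp [alp]; ring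
    by_cases h : bet A B C X + gam A B C X = 0
    · have hb0 : bet A B C X = 0 := by linarith
      have hc0 : gam A B C X = 0 := by linarith
      have ha1 : alp A B C X = 1 := by linarith
      have hXA : X = A := by
        rw [recon hd X, hb0, hc0, ha1]; simp
      rw [hXA]
      exact subset_convexHull ℝ _ (mem_insert _ _)
    · have hpos : 0 < bet A B C X + gam A B C X := lt_of_le_of_ne (by linarith) (Ne.symm h)
      have hq : (bet A B C X / (bet A B C X + gam A B C X)) • B +
          (gam A B C X / (bet A B C X + gam A B C X)) • C ∈
          convexHull ℝ ({A, B, C} : Set (ℝ × ℝ)) := by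
        apply segment_subset_convexHull (show B ∈ ({A,B,C} : Set (ℝ×ℝ)) by simp)
          (show C ∈ ({A,B,C} : Set (ℝ×ℝ)) by simp)
        exact ⟨_, _, by positivity, by positivity, by field_simp, rfl⟩
      have hA : A ∈ convexHull ℝ ({A, B, C} : Set (ℝ × ℝ)) :=
        subset_convexHull ℝ _ (mem_insert _ _)
      have hXseg : X ∈ segment ℝ A ((bet A B C X / (bet A B C X + gam A B C X)) • B +
          (gam A B C X / (bet A B C X + gam A B C X)) • C) := by
        refine ⟨alp A B C X, bet A B C X + gam A B C X, ha, le_of_lt hpos, by linarith, ?_⟩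
        rw [smul_add, smul_smul, smul_smul, mul_div_cancel₀ _ hpos.ne',
          mul_div_cancel₀ _ hpos.ne', ← add_assoc]
        exact (recon hd X).symm
      exact (convex_convexHull ℝ _).segment_subset hA hq hXseg

/-- If `s₀` is minimal in `[0,1]` with `(1-s₀)•P + s₀•Q` in the triangle, then either
`s₀ = 0`, or the point has some vanishing barycentric coordinate (realised as lying on
one of the sides, for the `alp`/`bet` cases). -/
lemma geo_endpoint (A B C P Q : ℝ × ℝ) (hd : det2 (B - A) (C - A) ≠ 0)
    (s₀ : ℝ) (h0 : 0 ≤ s₀) (h1 : s₀ ≤ 1)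
    (hmem : (1 - s₀) • P + s₀ • Q ∈ convexHull ℝ ({A, B, C} : Set (ℝ × ℝ)))
    (hmin : ∀ s, 0 ≤ s → s < s₀ →
      (1 - s) • P + s • Q ∉ convexHull ℝ ({A, B, C} : Set (ℝ × ℝ))) :
    s₀ = 0 ∨ gam A B C ((1 - s₀) • P + s₀ • Q) = 0 ∨
      ((1 - s₀) • P + s₀ • Q) ∈ segment ℝ B C ∨
      ((1 - s₀) • P + s₀ • Q) ∈ segment ℝ A C := by
  rcases eq_or_lt_of_le h0 with h | hpos0
  · exact Or.inl h.symm
  set X₀ := (1 - s₀) • P + s₀ • Q with hX₀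
  obtain ⟨hα, hβ, hγ⟩ := (mem_T_iff hd X₀).mp hmem
  by_cases hg : gam A B C X₀ = 0
  · exact Or.inr (Or.inl hg)
  by_cases hA0 : alp A B C X₀ = 0
  · -- X₀ ∈ segment B C
    refine Or.inr (Or.inr (Or.inl ?_))
    refine ⟨bet A B C X₀, gam A B C X₀, hβ, hγ, by simp [alp] at hA0; linarith, ?_⟩
    have := recon hd X₀
    rw [hA0, zero_smul, zero_add] at this
    exact this.symm
  by_cases hB0 : bet A B C X₀ = 0
  · refine Or.inr (Or.inr (Or.inr ?_))
    refine ⟨alp A B C X₀, gam A B C X₀, hα, hγ, by simp [alp] at hB0 ⊢; linarith, ?_⟩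
    have := recon hd X₀
    rw [hB0, zero_smul, add_zero] at this
    exact this.symm
  -- all three coordinates strictly positive: contradiction with minimality
  exfalso
  have hα' : 0 < alp A B C X₀ := lt_of_le_of_ne hα (Ne.symm hA0)
  have hβ' : 0 < bet A B C X₀ := lt_of_le_of_ne hβ (Ne.symm hB0)
  have hγ' : 0 < gam A B C X₀ := lt_of_le_of_ne hγ (Ne.symm hg)
  set aP := alp A B C P; set bP := bet A B C P; set gP := gam A B C P
  set aQ := alp A B C Q; set bQ := bet A B C Q; set gQ := gam A B C Q
  set D : ℝ := |aP - aQ| + |bP - bQ| + |gP - gQ| + 1 with hD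
  have hDpos : 0 < D := by positivity
  set ε : ℝ := min (min (alp A B C X₀) (bet A B C X₀)) (gam A B C X₀) with hε
  have hεpos : 0 < ε := lt_min (lt_min hα' hβ') hγ'
  set δ : ℝ := min s₀ (ε / D) with hδ
  have hδpos : 0 < δ := lt_min hpos0 (by positivity)
  set s := s₀ - δ / 2 with hs
  have hs0 : 0 < s := by
    have : δ ≤ s₀ := min_le_left _ _
    simp only [hs]; linarith
  have hslt : s < s₀ := by simp only [hs]; linarith
  apply hmin s (le_of_lt hs0) hslt
  rw [mem_T_iff hd]
  have combo : ∀ (φ : ℝ × ℝ → ℝ),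
      (∀ (u w : ℝ) (X Y : ℝ × ℝ), u + w = 1 → φ (u • X + w • Y) = u * φ X + w * φ Y) →
      φ ((1 - s) • P + s • Q) = φ X₀ + (δ / 2) * (φ P - φ Q) := by
    intro φ hφ
    have e1 : φ ((1 - s) • P + s • Q) = (1 - s) * φ P + s * φ Q := by
      rw [hφ (1 - s) s P Q (by ring)]
    have e2 : φ X₀ = (1 - s₀) * φ P + s₀ * φ Q := by
      rw [hX₀, hφ (1 - s₀) s₀ P Q (by ring)]
    rw [e1, e2, hs]; ring
  have hbnd : ∀ r : ℝ, |r| ≤ D - 1 + 1 → (δ / 2) * r ≥ -(ε / 2) := by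
    intro r hr
    have h1 : δ ≤ ε / D := min_le_right _ _
    have h2 : (δ / 2) * r ≥ -((δ / 2) * |r|) := by
      have := neg_abs_le r
      nlinarith [abs_nonneg r, hδpos]
    have h3 : (δ / 2) * |r| ≤ (ε / D / 2) * D := by
      have := abs_nonneg r
      nlinarith
    have h4 : (ε / D / 2) * D = ε / 2 := by field_simp
    linarith
  have habs1 : |aP - aQ| ≤ D - 1 + 1 := by
    have := abs_nonneg (bP - bQ); have := abs_nonneg (gP - gQ); simp [hD]; linarith
  have habs2 : |bP - bQ| ≤ D - 1 + 1 := by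
    have := abs_nonneg (aP - aQ); have := abs_nonneg (gP - gQ); simp [hD]; linarith
  have habs3 : |gP - gQ| ≤ D - 1 + 1 := by
    have := abs_nonneg (aP - aQ); have := abs_nonneg (bP - bQ); simp [hD]; linarith
  have hεa : ε ≤ alp A B C X₀ := le_trans (min_le_left _ _) (min_le_left _ _)
  have hεb : ε ≤ bet A B C X₀ := le_trans (min_le_left _ _) (min_le_right _ _)
  have hεc : ε ≤ gam A B C X₀ := min_le_right _ _
  refine ⟨?_, ?_, ?_⟩
  · rw [combo _ (fun u w X Y h => alp_combo h X Y)]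
    have := hbnd (aP - aQ) habs1
    linarith
  · rw [combo _ (fun u w X Y h => bet_combo h X Y)]
    have := hbnd (bP - bQ) habs2
    linarith
  · rw [combo _ (fun u w X Y h => gam_combo h X Y)]
    have := hbnd (gP - gQ) habs3
    linarith

set_option maxHeartbeats 1000000


/-- No two distinct edges of `G`, drawn via `pos`, intersect except at images of
common end-vertices. -/
def NoncrossPos {V : Type*} (G : SimpleGraph V) (pos : V → ℝ × ℝ) : Prop :=
  ∀ e₁ ∈ G.edgeSet, ∀ e₂ ∈ G.edgeSet, e₁ ≠ e₂ →
    ∀ a b c d : V, e₁ = s(a, b) → e₂ = s(c, d) →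
      segment ℝ (pos a) (pos b) ∩ segment ℝ (pos c) (pos d) ⊆
        pos '' {x | x ∈ e₁ ∧ x ∈ e₂}

/-- The graph `G / (v,a)`: `v` is contracted onto `a` (each edge `(v,x)` is replaced
by `(a,x)`, duplicates removed, and `v` becomes isolated). -/
def contractOnto {V : Type*} (G : SimpleGraph V) (v a : V) : SimpleGraph V :=
  SimpleGraph.fromRel (fun x y =>
    x ≠ v ∧ y ≠ v ∧ (G.Adj x y ∨ (x = a ∧ G.Adj v y) ∨ (y = a ∧ G.Adj v x)))

/-- Linear interpolation of points. -/
def lin (t : ℝ) (A B : ℝ × ℝ) : ℝ × ℝ := (1 - t) • A + t • B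

/-- Let `v` be a (quasi-contractible) vertex of degree 2 whose two neighbors `a`, `b`
are joined by an edge, and suppose the triangle `a, b, v` bounds an empty face of the
planar straight-line drawing `pos` of `G`.  Then contracting `v` onto `a` yields a
planar straight-line drawing of `G / (v,a)`, and the linear motion of `v` along the
segment from `pos v` to `pos a` (all other vertices fixed) keeps the edges incident
to `v` inside the triangle `a, b, v` at all times, hence preserves planarity. -/
theorem contract_degree_two_vertex_planar
    {V : Type*} [DecidableEq V] (G : SimpleGraph V) [DecidableRel G.Adj]
    (pos : V → ℝ × ℝ) (hinj : Function.Injective pos)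
    (hplanar : NoncrossPos G pos)
    (v a b : V) (hab : G.Adj a b)
    (hnbrs : G.neighborSet v = {a, b})
    (hempty : ∀ x : V,
      pos x ∈ convexHull ℝ ({pos a, pos b, pos v} : Set (ℝ × ℝ)) →
        x ∈ ({a, b, v} : Set V)) :
    NoncrossPos (contractOnto G v a) pos ∧
      (∀ t ∈ Set.Icc (0 : ℝ) 1,
        segment ℝ (lin t (pos v) (pos a)) (pos a) ⊆
            convexHull ℝ ({pos a, pos b, pos v} : Set (ℝ × ℝ)) ∧
          segment ℝ (lin t (pos v) (pos a)) (pos b) ⊆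
            convexHull ℝ ({pos a, pos b, pos v} : Set (ℝ × ℝ))) ∧
      (∀ t ∈ Set.Ico (0 : ℝ) 1,
        NoncrossPos G (Function.update pos v (lin t (pos v) (pos a)))) := by
    classical
  have hva : G.Adj v a := by
    have : a ∈ G.neighborSet v := by rw [hnbrs]; exact Set.mem_insert _ _
    exact this
  have hvb : G.Adj v b := by
    have : b ∈ G.neighborSet v := by rw [hnbrs]; exact Set.mem_insert_iff.mpr (Or.inr rfl)
    exact this
  have hvna : v ≠ a := hva.ne
  have hvnb : v ≠ b := hvb.ne
  have hanb : a ≠ b := hab.ne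
  have hAdjv : ∀ y, G.Adj v y → y = a ∨ y = b := by
    intro y hy
    have : y ∈ G.neighborSet v := hy
    rw [hnbrs] at this
    simpa using this
  -- a helper to exploit `hplanar`
  have getvert : ∀ (x y z w : V), G.Adj x y → G.Adj z w → s(x, y) ≠ s(z, w) →
      ∀ q, q ∈ segment ℝ (pos x) (pos y) → q ∈ segment ℝ (pos z) (pos w) →
      ∃ u, (u = x ∨ u = y) ∧ (u = z ∨ u = w) ∧ pos u = q := by
    intro x y z w h1 h2 hne q hq1 hq2
    obtain ⟨u, ⟨m1, m2⟩, m3⟩ := hplanar s(x, y) ((G.mem_edgeSet).mpr h1)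
      s(z, w) ((G.mem_edgeSet).mpr h2) hne x y z w rfl rfl ⟨hq1, hq2⟩
    exact ⟨u, Sym2.mem_iff.mp m1, Sym2.mem_iff.mp m2, m3⟩
  -- non-degeneracy of the triangle
  have hd : det2 (pos b - pos a) (pos v - pos a) ≠ 0 := by
    intro hd0
    have hcol : Collinear ℝ ({pos a, pos b, pos v} : Set (ℝ × ℝ)) := by
      rw [collinear_iff_of_mem (Set.mem_insert (pos a) _)]
      refine ⟨pos b - pos a, ?_⟩
      rintro q (rfl | rfl | rfl)
      · exact ⟨0, by simp⟩
      · exact ⟨1, by simp⟩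
      · -- pos v = k • u +ᵥ pos a using det2 = 0
        set u : ℝ × ℝ := pos b - pos a with hu
        set w : ℝ × ℝ := pos v - pos a with hw
        have hdet : u.1 * w.2 - u.2 * w.1 = 0 := hd0
        rcases eq_or_ne u.1 0 with h1 | h1
        · rcases eq_or_ne u.2 0 with h2 | h2
          · exfalso
            have : u = 0 := Prod.ext_iff.mpr ⟨h1, h2⟩
            rw [hu, sub_eq_zero] at this
            exact hanb (hinj this).symm
          · refine ⟨w.2 / u.2, ?_⟩
            have hw1 : w.1 = 0 := by
              have h0 : u.2 * w.1 = 0 := by rw [h1] at hdet; linarith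
              exact (mul_eq_zero.mp h0).resolve_left h2
            have : w = (w.2 / u.2) • u := by
              apply Prod.ext_iff.mpr
              constructor
              · simp [hw1, h1, Prod.smul_fst]
              · simp [Prod.smul_snd, smul_eq_mul]; field_simp
            show pos v = (w.2 / u.2) • u +ᵥ pos a
            rw [← this, hw]
            simp
        · refine ⟨w.1 / u.1, ?_⟩
          have : w = (w.1 / u.1) • u := by
            apply Prod.ext_iff.mpr
            constructor
            · simp [Prod.smul_fst, smul_eq_mul]; field_simp
            · simp [Prod.smul_snd, smul_eq_mul]
              field_simp
              linear_combination hdet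
          show pos v = (w.1 / u.1) • u +ᵥ pos a
          rw [← this, hw]
          simp
    rcases hcol.wbtw_or_wbtw_or_wbtw with h | h | h
    · -- pos b between pos a, pos v : edges s(a,v), s(a,b)
      have hseg : pos b ∈ segment ℝ (pos a) (pos v) := h.mem_segment
      have hne : s(a, v) ≠ s(a, b) := by
        intro hEq
        rw [Sym2.eq_iff] at hEq
        rcases hEq with ⟨h₁, h₂⟩ | ⟨h₁, h₂⟩
        · exact hvnb h₂
        · exact hanb h₁
      obtain ⟨u, hu1, hu2, hu3⟩ := getvert a v a b hva.symm hab hne (pos b) hseg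
        (right_mem_segment ℝ _ _)
      have := hinj hu3
      subst this
      rcases hu1 with rfl | rfl
      · exact hanb rfl
      · exact hvnb rfl
    · -- pos v between pos b, pos a : edges s(b,a), s(b,v)... wbtw b v a
      have hseg : pos v ∈ segment ℝ (pos b) (pos a) := h.mem_segment
      have hne : s(b, a) ≠ s(v, b) := by
        intro hEq
        rw [Sym2.eq_iff] at hEq
        rcases hEq with ⟨h₁, h₂⟩ | ⟨h₁, h₂⟩
        · exact hvnb h₁.symm
        · exact hvna h₂.symm
      obtain ⟨u, hu1, hu2, hu3⟩ := getvert b a v b hab.symm hvb hne (pos v) hseg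
        (left_mem_segment ℝ _ _)
      have := hinj hu3
      subst this
      rcases hu1 with rfl | rfl
      · exact hvnb rfl
      · exact hvna rfl
    · -- pos a between pos v, pos b : wbtw v a b
      have hseg : pos a ∈ segment ℝ (pos v) (pos b) := h.mem_segment
      have hne : s(v, b) ≠ s(a, b) := by
        intro hEq
        rw [Sym2.eq_iff] at hEq
        rcases hEq with ⟨h₁, h₂⟩ | ⟨h₁, h₂⟩
        · exact hvna h₁
        · exact hvnb h₁
      obtain ⟨u, hu1, hu2, hu3⟩ := getvert v b a b hvb hab hne (pos a) hseg
        (left_mem_segment ℝ _ _)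
      have := hinj hu3
      subst this
      rcases hu1 with rfl | rfl
      · exact hvna rfl
      · exact hanb rfl
  refine ⟨?_, ?_, ?_⟩
  · -- Part 1 : the contracted graph is a subgraph of G, so noncrossing is inherited
    have hsub : contractOnto G v a ≤ G := by
      intro x y hxy
      rw [contractOnto, SimpleGraph.fromRel_adj] at hxy
      obtain ⟨hxy0, h⟩ := hxy
      have core : ∀ x' y' : V, x' ≠ y' →
          (x' ≠ v ∧ y' ≠ v ∧ (G.Adj x' y' ∨ (x' = a ∧ G.Adj v y') ∨ (y' = a ∧ G.Adj v x'))) →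
          G.Adj x' y' := by
        intro x' y' hne' hh
        obtain ⟨hx', hy', hcases⟩ := hh
        rcases hcases with hc | ⟨he, hc⟩ | ⟨he, hc⟩
        · exact hc
        · subst he
          rcases hAdjv _ hc with he2 | he2
          · exact absurd he2.symm hne'
          · subst he2; exact hab
        · subst he
          rcases hAdjv _ hc with he2 | he2
          · exact absurd he2 hne'
          · subst he2; exact hab.symm
      rcases h with h | h
      · exact core x y hxy0 h
      · exact (core y x hxy0.symm h).symm
    intro e₁ he₁ e₂ he₂ hne x₁ y₁ x₂ y₂ h₁ h₂
    exact hplanar e₁ (SimpleGraph.edgeSet_mono hsub he₁) e₂ (SimpleGraph.edgeSet_mono hsub he₂)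
      hne x₁ y₁ x₂ y₂ h₁ h₂
  · -- Part 2 : the moving edges stay inside the triangle
    intro t ht
    have hP : lin t (pos v) (pos a) ∈ convexHull ℝ ({pos a, pos b, pos v} : Set (ℝ × ℝ)) := by
      apply segment_subset_convexHull
        (show pos v ∈ ({pos a, pos b, pos v} : Set (ℝ × ℝ)) by simp)
        (show pos a ∈ ({pos a, pos b, pos v} : Set (ℝ × ℝ)) by simp)
      exact ⟨1 - t, t, by linarith [ht.1, ht.2], ht.1, by ring, rfl⟩
    constructor
    · exact (convex_convexHull ℝ _).segment_subset hP
        (subset_convexHull ℝ _ (by simp))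
    · exact (convex_convexHull ℝ _).segment_subset hP
        (subset_convexHull ℝ _ (by simp))
  · -- Part 3 : planarity during the motion
    intro t ht
    obtain ⟨ht0, ht1⟩ := ht
    set P : ℝ × ℝ := lin t (pos v) (pos a) with hPdef
    have hPeq : P = (1 - t) • pos v + t • pos a := rfl
    have gamP : gam (pos a) (pos b) (pos v) P = 1 - t := by
      rw [hPeq, gam_combo (show (1 - t) + t = 1 by ring), gam_C hd, gam_A]
      ring
    have betP : bet (pos a) (pos b) (pos v) P = 0 := by
      rw [hPeq, bet_combo (show (1 - t) + t = 1 by ring), bet_C, bet_A]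
      ring
    have hPT : P ∈ convexHull ℝ ({pos a, pos b, pos v} : Set (ℝ × ℝ)) := by
      apply segment_subset_convexHull
        (show pos v ∈ ({pos a, pos b, pos v} : Set (ℝ × ℝ)) by simp)
        (show pos a ∈ ({pos a, pos b, pos v} : Set (ℝ × ℝ)) by simp)
      exact ⟨1 - t, t, by linarith, ht0, by ring, rfl⟩
    have gam_vertex : ∀ u : V, u ≠ v →
        pos u ∈ convexHull ℝ ({pos a, pos b, pos v} : Set (ℝ × ℝ)) →
        gam (pos a) (pos b) (pos v) (pos u) = 0 := by
      intro u huv hu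
      have := hempty u hu
      simp only [Set.mem_insert_iff, Set.mem_singleton_iff] at this
      rcases this with rfl | rfl | rfl
      · exact gam_A
      · exact gam_B
      · exact absurd rfl huv
    have key : ∀ x y : V, G.Adj x y → x ≠ v → y ≠ v →
        ∀ q, q ∈ segment ℝ (pos x) (pos y) →
        q ∈ convexHull ℝ ({pos a, pos b, pos v} : Set (ℝ × ℝ)) →
        gam (pos a) (pos b) (pos v) q = 0 := by
      intro x y hadj hxv hyv q hq hqT
      have consume : ∀ X₀, X₀ ∈ segment ℝ (pos x) (pos y) →
          (X₀ ∈ segment ℝ (pos b) (pos v) ∨ X₀ ∈ segment ℝ (pos a) (pos v)) →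
          gam (pos a) (pos b) (pos v) X₀ = 0 := by
        intro X₀ hX₀ hside
        rcases hside with hs1 | hs2
        · have hne : s(x, y) ≠ s(v, b) := by
            intro hEq
            rw [Sym2.eq_iff] at hEq
            rcases hEq with ⟨h₁, h₂⟩ | ⟨h₁, h₂⟩
            · exact hxv h₁
            · exact hyv h₂
          obtain ⟨u, hu1, hu2, hu3⟩ := getvert x y v b hadj hvb hne X₀ hX₀
            (by rwa [segment_symm])
          rcases hu2 with rfl | rfl
          · rcases hu1 with rfl | rfl
            · exact absurd rfl hxv
            · exact absurd rfl hyv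
          · rw [← hu3]; exact gam_B
        · have hne : s(x, y) ≠ s(v, a) := by
            intro hEq
            rw [Sym2.eq_iff] at hEq
            rcases hEq with ⟨h₁, h₂⟩ | ⟨h₁, h₂⟩
            · exact hxv h₁
            · exact hyv h₂
          obtain ⟨u, hu1, hu2, hu3⟩ := getvert x y v a hadj hva hne X₀ hX₀
            (by rwa [segment_symm])
          rcases hu2 with rfl | rfl
          · rcases hu1 with rfl | rfl
            · exact absurd rfl hxv
            · exact absurd rfl hyv
          · rw [← hu3]; exact gam_A
      set f : ℝ → ℝ × ℝ := fun s => (1 - s) • pos x + s • pos y with hf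
      set I : Set ℝ := {s | s ∈ Set.Icc (0:ℝ) 1 ∧
        f s ∈ convexHull ℝ ({pos a, pos b, pos v} : Set (ℝ × ℝ))} with hI
      have hIclosed : IsClosed I := by
        have hIeq : I = Set.Icc (0:ℝ) 1 ∩
            ((fun s => alp (pos a) (pos b) (pos v) (f s)) ⁻¹' Set.Ici 0 ∩
             ((fun s => bet (pos a) (pos b) (pos v) (f s)) ⁻¹' Set.Ici 0 ∩
              (fun s => gam (pos a) (pos b) (pos v) (f s)) ⁻¹' Set.Ici 0)) := by
          ext s
          simp only [hI, Set.mem_setOf_eq, Set.mem_inter_iff, Set.mem_preimage, Set.mem_Ici,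
            mem_T_iff hd, and_assoc]
        rw [hIeq]
        have hcont : ∀ φ : ℝ × ℝ → ℝ,
            (∀ (u w : ℝ) (X Y : ℝ × ℝ), u + w = 1 → φ (u • X + w • Y) = u * φ X + w * φ Y) →
            Continuous fun s => φ (f s) := by
          intro φ hφ
          have : (fun s => φ (f s)) = fun s => (1 - s) * φ (pos x) + s * φ (pos y) := by
            funext s
            simp only [hf]
            exact hφ _ _ _ _ (by ring)
          rw [this]
          fun_prop
        exact isClosed_Icc.inter
          ((IsClosed.preimage (hcont _ (fun u w X Y h => alp_combo h X Y)) isClosed_Ici).inter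
           ((IsClosed.preimage (hcont _ (fun u w X Y h => bet_combo h X Y)) isClosed_Ici).inter
            (IsClosed.preimage (hcont _ (fun u w X Y h => gam_combo h X Y)) isClosed_Ici)))
      rw [segment_eq_image] at hq
      obtain ⟨σ, hσmem, hσq⟩ := hq
      have hσI : σ ∈ I := ⟨hσmem, by show f σ ∈ _; rw [show f σ = q from hσq]; exact hqT⟩
      have hne' : I.Nonempty := ⟨σ, hσI⟩
      have hbdd : BddBelow I := ⟨0, fun z hz => hz.1.1⟩
      have hbdd' : BddAbove I := ⟨1, fun z hz => hz.1.2⟩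
      set s₀ := sInf I with hs₀
      set s₁ := sSup I with hs₁
      have hs₀I : s₀ ∈ I := hIclosed.csInf_mem hne' hbdd
      have hs₁I : s₁ ∈ I := hIclosed.csSup_mem hne' hbdd'
      have hg0 : gam (pos a) (pos b) (pos v) (f s₀) = 0 := by
        have hmin : ∀ s, 0 ≤ s → s < s₀ →
            (1 - s) • pos x + s • pos y ∉
              convexHull ℝ ({pos a, pos b, pos v} : Set (ℝ × ℝ)) := by
          intro s hs hlt hT'
          have hsI : s ∈ I := ⟨⟨hs, le_trans hlt.le hs₀I.1.2⟩, hT'⟩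
          exact absurd (csInf_le hbdd hsI) (not_le.mpr hlt)
        have hmem' : (1 - s₀) • pos x + s₀ • pos y ∈
            convexHull ℝ ({pos a, pos b, pos v} : Set (ℝ × ℝ)) := hs₀I.2
        rcases geo_endpoint (pos a) (pos b) (pos v) (pos x) (pos y) hd s₀
            hs₀I.1.1 hs₀I.1.2 hmem' hmin with h | h | h | h
        · have hfx : f s₀ = pos x := by rw [hf]; simp [h]
          rw [hfx]
          exact gam_vertex x hxv (by rw [← hfx]; exact hs₀I.2)
        · exact h
        · exact consume (f s₀) (by rw [segment_eq_image]; exact ⟨s₀, hs₀I.1, rfl⟩) (Or.inl h)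
        · exact consume (f s₀) (by rw [segment_eq_image]; exact ⟨s₀, hs₀I.1, rfl⟩) (Or.inr h)
      have hg1 : gam (pos a) (pos b) (pos v) (f s₁) = 0 := by
        have heqX : ∀ s : ℝ, (1 - (1 - s)) • pos y + (1 - s) • pos x = f s := by
          intro s
          rw [hf]
          module
        have hmin : ∀ s, 0 ≤ s → s < 1 - s₁ →
            (1 - s) • pos y + s • pos x ∉
              convexHull ℝ ({pos a, pos b, pos v} : Set (ℝ × ℝ)) := by
          intro s hs hlt hT'
          have heq2 : (1 - s) • pos y + s • pos x = f (1 - s) := by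
            rw [hf]
            module
          have hsI : (1 - s) ∈ I := by
            refine ⟨⟨by linarith [hs₁I.1.1], by linarith⟩, ?_⟩
            rw [← heq2]
            exact hT'
          have := le_csSup hbdd' hsI
          linarith
        have hmem' : (1 - (1 - s₁)) • pos y + (1 - s₁) • pos x ∈
            convexHull ℝ ({pos a, pos b, pos v} : Set (ℝ × ℝ)) := by
          rw [heqX s₁]
          exact hs₁I.2
        rcases geo_endpoint (pos a) (pos b) (pos v) (pos y) (pos x) hd (1 - s₁)
            (by linarith [hs₁I.1.2]) (by linarith [hs₁I.1.1]) hmem' hmin with h | h | h | h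
        · have hone : s₁ = 1 := by linarith
          have hfy : f s₁ = pos y := by rw [hf]; simp [hone]
          rw [hfy]
          exact gam_vertex y hyv (by rw [← hfy]; exact hs₁I.2)
        · rw [heqX s₁] at h
          exact h
        · rw [heqX s₁] at h
          exact consume (f s₁) (by rw [segment_eq_image]; exact ⟨s₁, hs₁I.1, rfl⟩) (Or.inl h)
        · rw [heqX s₁] at h
          exact consume (f s₁) (by rw [segment_eq_image]; exact ⟨s₁, hs₁I.1, rfl⟩) (Or.inr h)
      have hcombo : ∀ s : ℝ, gam (pos a) (pos b) (pos v) (f s) =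
          (1 - s) * gam (pos a) (pos b) (pos v) (pos x) +
          s * gam (pos a) (pos b) (pos v) (pos y) := by
        intro s
        rw [hf]
        exact gam_combo (by ring) _ _
      rw [hcombo] at hg0 hg1
      have hqg : gam (pos a) (pos b) (pos v) q =
          (1 - σ) * gam (pos a) (pos b) (pos v) (pos x) +
          σ * gam (pos a) (pos b) (pos v) (pos y) := by
        rw [← hσq]
        exact gam_combo (by ring) _ _
      have hfac : (s₁ - s₀) * (gam (pos a) (pos b) (pos v) (pos y) -
          gam (pos a) (pos b) (pos v) (pos x)) = 0 := by
        linear_combination hg1 - hg0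
      rcases mul_eq_zero.mp hfac with h | h
      · have hσ0 : σ = s₀ := le_antisymm (by have := le_csSup hbdd' hσI; linarith)
          (csInf_le hbdd hσI)
        rw [hqg, hσ0]
        exact hg0
      · have hgx : gam (pos a) (pos b) (pos v) (pos x) = 0 := by
          linear_combination hg0 - s₀ * h
        have hgy : gam (pos a) (pos b) (pos v) (pos y) = 0 := by
          linear_combination hg0 + (1 - s₀) * h
        rw [hqg, hgx, hgy]
        ring
    -- the contraction step for a single moving edge
    have core2 : ∀ x y z : V, G.Adj x y → x ≠ v → y ≠ v → (z = a ∨ z = b) →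
        ∀ q, q ∈ segment ℝ (pos x) (pos y) → q ∈ segment ℝ P (pos z) →
        q = pos z ∧ (z = x ∨ z = y) := by
      intro x y z hadj hxv hyv hz q hq1 hq2
      have hposzT : pos z ∈ convexHull ℝ ({pos a, pos b, pos v} : Set (ℝ × ℝ)) := by
        apply subset_convexHull
        rcases hz with rfl | rfl <;> simp
      have hqT : q ∈ convexHull ℝ ({pos a, pos b, pos v} : Set (ℝ × ℝ)) :=
        (convex_convexHull ℝ _).segment_subset hPT hposzT hq2
      have hkey := key x y hadj hxv hyv q hq1 hqT
      rw [segment_eq_image] at hq2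
      obtain ⟨σ, hσmem, hσq⟩ := hq2
      have hgz : gam (pos a) (pos b) (pos v) (pos z) = 0 := by
        rcases hz with rfl | rfl
        · exact gam_A
        · exact gam_B
      have hprod : (1 - σ) * (1 - t) = 0 := by
        have hcq : gam (pos a) (pos b) (pos v) q =
            (1 - σ) * gam (pos a) (pos b) (pos v) P +
            σ * gam (pos a) (pos b) (pos v) (pos z) := by
          rw [← hσq]
          exact gam_combo (by ring) _ _
        rw [hkey, gamP, hgz] at hcq
        linarith
      have hσ1 : σ = 1 := by
        rcases mul_eq_zero.mp hprod with h | h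
        · linarith
        · linarith
      have hq_eq : q = pos z := by
        rw [← hσq, hσ1]
        simp
      refine ⟨hq_eq, ?_⟩
      have hq1' : pos z ∈ segment ℝ (pos x) (pos y) := by rwa [hq_eq] at hq1
      have hzmemAB : pos z ∈ segment ℝ (pos a) (pos b) := by
        rcases hz with rfl | rfl
        · exact left_mem_segment ℝ _ _
        · exact right_mem_segment ℝ _ _
      by_cases he : s(x, y) = s(a, b)
      · rw [Sym2.eq_iff] at he
        rcases he with ⟨hxa, hyb⟩ | ⟨hxb, hya⟩ <;> rcases hz with hza | hzb
        · exact Or.inl (hza.trans hxa.symm)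
        · exact Or.inr (hzb.trans hyb.symm)
        · exact Or.inr (hza.trans hya.symm)
        · exact Or.inl (hzb.trans hxb.symm)
      · obtain ⟨u, hu1, hu2, hu3⟩ := getvert x y a b hadj hab he (pos z) hq1' hzmemAB
        have : u = z := hinj hu3
        subst this
        exact hu1
    -- classification of edges under the updated position map
    intro e₁ he₁ e₂ he₂ hne x₁ y₁ x₂ y₂ h₁ h₂
    subst h₁
    subst h₂
    have hadj₁ : G.Adj x₁ y₁ := (G.mem_edgeSet).mp he₁
    have hadj₂ : G.Adj x₂ y₂ := (G.mem_edgeSet).mp he₂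
    have hclass : ∀ x y : V, G.Adj x y →
        (x ≠ v ∧ y ≠ v ∧ Function.update pos v P x = pos x ∧
          Function.update pos v P y = pos y) ∨
        ∃ z, (z = a ∨ z = b) ∧ z ≠ v ∧ s(x, y) = s(v, z) ∧
          segment ℝ (Function.update pos v P x) (Function.update pos v P y) =
            segment ℝ P (pos z) := by
      intro x y hadj
      by_cases hx : x = v
      · right
        have hadj' : G.Adj v y := hx ▸ hadj
        have hy : y ≠ v := fun h => G.irrefl (h ▸ hadj')
        refine ⟨y, hAdjv y hadj', hy, by rw [hx], ?_⟩
        rw [hx, Function.update_self, Function.update_of_ne hy]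
      · by_cases hy : y = v
        · right
          have hadj' : G.Adj v x := hy ▸ hadj.symm
          refine ⟨x, hAdjv x hadj', hx, by rw [hy]; exact Sym2.eq_swap, ?_⟩
          rw [hy, Function.update_self, Function.update_of_ne hx, segment_symm]
        · left
          exact ⟨hx, hy, Function.update_of_ne hx _ _, Function.update_of_ne hy _ _⟩
    rcases hclass x₁ y₁ hadj₁ with ⟨hx1, hy1, hu1, hu1'⟩ | ⟨z₁, hz₁, hz₁v, hez₁, hseg₁⟩
    · rcases hclass x₂ y₂ hadj₂ with ⟨hx2, hy2, hu2, hu2'⟩ | ⟨z₂, hz₂, hz₂v, hez₂, hseg₂⟩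
      · -- neither edge moves
        rw [hu1, hu1', hu2, hu2']
        intro q hq
        obtain ⟨u, hu, huq⟩ := hplanar _ he₁ _ he₂ hne x₁ y₁ x₂ y₂ rfl rfl hq
        have huv : u ≠ v := by
          rcases Sym2.mem_iff.mp hu.1 with rfl | rfl
          · exact hx1
          · exact hy1
        exact ⟨u, hu, by rw [Function.update_of_ne huv]; exact huq⟩
      · -- e₁ fixed, e₂ moving
        rw [hu1, hu1', hseg₂]
        intro q hq
        obtain ⟨hqz, hzxy⟩ := core2 x₁ y₁ z₂ hadj₁ hx1 hy1 hz₂ q hq.1 hq.2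
        refine ⟨z₂, ⟨?_, ?_⟩, ?_⟩
        · rcases hzxy with rfl | rfl
          · exact Sym2.mem_mk_left _ _
          · exact Sym2.mem_mk_right _ _
        · rw [hez₂]
          exact Sym2.mem_mk_right _ _
        · rw [Function.update_of_ne hz₂v]
          exact hqz.symm
    · rcases hclass x₂ y₂ hadj₂ with ⟨hx2, hy2, hu2, hu2'⟩ | ⟨z₂, hz₂, hz₂v, hez₂, hseg₂⟩
      · -- e₁ moving, e₂ fixed
        rw [hseg₁, hu2, hu2']
        intro q hq
        obtain ⟨hqz, hzxy⟩ := core2 x₂ y₂ z₁ hadj₂ hx2 hy2 hz₁ q hq.2 hq.1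
        refine ⟨z₁, ⟨?_, ?_⟩, ?_⟩
        · rw [hez₁]
          exact Sym2.mem_mk_right _ _
        · rcases hzxy with rfl | rfl
          · exact Sym2.mem_mk_left _ _
          · exact Sym2.mem_mk_right _ _
        · rw [Function.update_of_ne hz₁v]
          exact hqz.symm
      · -- both edges move : they share only the moving endpoint
        rw [hseg₁, hseg₂]
        have hz12 : z₁ ≠ z₂ := by
          rintro rfl
          exact hne (hez₁.trans hez₂.symm)
        have hPab : ∀ q, q ∈ segment ℝ P (pos a) → q ∈ segment ℝ P (pos b) → q = P := by
          intro q hqa hqb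
          rw [segment_eq_image] at hqa hqb
          obtain ⟨σ, hσmem, hσq⟩ := hqa
          obtain ⟨τ, hτmem, hτq⟩ := hqb
          have h1 : bet (pos a) (pos b) (pos v) q = 0 := by
            rw [← hσq, bet_combo (show (1 - σ) + σ = 1 by ring), betP, bet_A]
            ring
          have h2 : bet (pos a) (pos b) (pos v) q = τ := by
            rw [← hτq, bet_combo (show (1 - τ) + τ = 1 by ring), betP, bet_B hd]
            ring
          have hτ0 : τ = 0 := by rw [← h2, h1]
          rw [← hτq, hτ0]
          simp
        intro q hq
        have hqP : q = P := by
          rcases hz₁ with rfl | rfl <;> rcases hz₂ with rfl | rfl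
          · exact absurd rfl hz12
          · exact hPab q hq.1 hq.2
          · exact hPab q hq.2 hq.1
          · exact absurd rfl hz12
        refine ⟨v, ⟨?_, ?_⟩, ?_⟩
        · rw [hez₁]
          exact Sym2.mem_mk_left _ _
        · rw [hez₂]
          exact Sym2.mem_mk_left _ _
        · rw [Function.update_self]
          exact hqP.symm
end
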